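/- Let G be a group acting on ℤ by bijections that are (L,A)-quasi-isometries. Then there exist a branched line β, an isometric simplicial action of G on β, and a G-equivariant bijection q : ℤ → t(β) onto the set of tips of β, such that q is an M-bi-Lipschitz map and every vertex of β has valence at most M, where M depends only on L and A. -/

import Mathlib

/-- `f : ℤ → ℤ` is an `(L,A)`-quasi-isometry of `ℤ` with its standard metric. -/
def IsQIZ (L A : ℝ) (f : ℤ → ℤ) : Prop :=
  (∀ m n : ℤ,
      L⁻¹ * |(m : ℝ) - n| - A ≤ |(f m : ℝ) - f n| ∧
      |(f m : ℝ) - f n| ≤ L * |(m : ℝ) - n| + A) ∧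
  ∀ n : ℤ, ∃ m : ℤ, |(n : ℝ) - f m| ≤ A

/-- The branched line determined by a branching datum `b : ℤ → ℕ`: it is obtained
from `ℝ` (with integer vertices) by attaching `b n` unit edges at the integer point
`n`.  Its vertex set consists of the core integer points `.inl n` and the free
endpoints `.inr ⟨n, k⟩` of the attached edges. -/
def BL (b : ℤ → ℕ) : Type := ℤ ⊕ (Σ n : ℤ, Fin (b n))

open Classical in
/-- The path metric of the branched line `BL b`, restricted to its vertices. -/
noncomputable def blDist (b : ℤ → ℕ) : BL b → BL b → ℝ := fun x y =>
  if x = y then 0 else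
    match x, y with
    | .inl m, .inl n => |(m : ℝ) - n|
    | .inl m, .inr p => |(m : ℝ) - p.1| + 1
    | .inr p, .inl m => |(m : ℝ) - p.1| + 1
    | .inr p, .inr q => if p.1 = q.1 then 2 else |(p.1 : ℝ) - q.1| + 2

/-- The tips of the branched line: free endpoints of attached edges together with
the unbranched integer points (i.e. the vertices of valence `≤ 2`). -/
def blTip (b : ℤ → ℕ) : BL b → Prop := fun x =>
  match x with
  | .inl n => b n = 0
  | .inr _ => True

noncomputable section

section blDistLemmas

variable (b : ℤ → ℕ)

lemma blDist_self (v : BL b) : blDist b v v = 0 := by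
  unfold blDist
  rw [if_pos rfl]

lemma blDist_ll {x y : ℤ} (h : x ≠ y) :
    blDist b (Sum.inl x) (Sum.inl y) = |(x:ℝ) - y| := by
  unfold blDist
  exact if_neg (fun hc => h (Sum.inl.inj hc))

lemma blDist_lr (x : ℤ) (p : Σ n : ℤ, Fin (b n)) :
    blDist b (Sum.inl x) (Sum.inr p) = |(x:ℝ) - p.1| + 1 := by
  unfold blDist
  exact if_neg (fun hc => Sum.inl_ne_inr hc)

lemma blDist_rl (x : ℤ) (p : Σ n : ℤ, Fin (b n)) :
    blDist b (Sum.inr p) (Sum.inl x) = |(x:ℝ) - p.1| + 1 := by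
  unfold blDist
  exact if_neg (fun hc => Sum.inr_ne_inl hc)

lemma blDist_rr_same {p q : Σ n : ℤ, Fin (b n)} (hne : p ≠ q) (h1 : p.1 = q.1) :
    blDist b (Sum.inr p) (Sum.inr q) = 2 := by
  unfold blDist
  refine (if_neg (fun hc => hne (Sum.inr.inj hc))).trans ?_
  show (if p.1 = q.1 then (2:ℝ) else |(p.1:ℝ) - q.1| + 2) = 2
  rw [if_pos h1]

lemma blDist_rr_diff {p q : Σ n : ℤ, Fin (b n)} (h1 : p.1 ≠ q.1) :
    blDist b (Sum.inr p) (Sum.inr q) = |(p.1:ℝ) - q.1| + 2 := by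
  have hne : p ≠ q := fun hc => h1 (by rw [hc])
  unfold blDist
  refine (if_neg (fun hc => hne (Sum.inr.inj hc))).trans ?_
  show (if p.1 = q.1 then (2:ℝ) else |(p.1:ℝ) - q.1| + 2) = _
  rw [if_neg h1]

end blDistLemmas

namespace S17

def Rr (L A : ℝ) : ℕ := ⌊L*(3*A+2*L)⌋₊ + 1

def C1 (L A : ℝ) : ℝ := L * (Rr L A) + A

def C2 (L A : ℝ) : ℤ := 2*⌈C1 L A⌉ + 2

lemma rigid (L A : ℝ) (hL : 1 ≤ L) (hA : 0 ≤ A) (f : Equiv.Perm ℤ)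
    (hb : ∀ m n : ℤ, L⁻¹ * |(m : ℝ) - n| - A ≤ |(f m : ℝ) - f n| ∧
      |(f m : ℝ) - f n| ≤ L * |(m : ℝ) - n| + A) :
    ∃ ε : ℤ, (ε = 1 ∨ ε = -1) ∧ ∀ n : ℤ, |f n - (ε * n + f 0)| ≤ C2 L A := by
  have hL0 : (0:ℝ) < L := lt_of_lt_of_le one_pos hL
  have hRgt0 : L*(3*A+2*L) < ((Rr L A : ℕ):ℝ) := by
    have := Nat.lt_floor_add_one (L*(3*A+2*L))
    rw [Rr]; push_cast; linarith
  set R : ℕ := Rr L A with hRdef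
  have hRgt : L*(3*A+2*L) < (R:ℝ) := hRgt0
  set Q : ℝ := (R:ℝ)/L - A with hQdef
  have hQS : 2*(L+A) < Q := by
    rw [hQdef, lt_sub_iff_add_lt, lt_div_iff₀ hL0]
    nlinarith
  have hQpos : 0 < Q := by nlinarith
  set D : ℤ → ℤ := fun n => f (n + R) - f n with hDdef
  have habs : ∀ m n : ℤ, |(f m : ℝ) - f n| ≤ L * |(m : ℝ) - n| + A := fun m n => (hb m n).2
  have hDlow : ∀ n : ℤ, Q ≤ |(D n : ℝ)| := by
    intro n
    have h1 := (hb (n + R) n).1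
    have h2 : |((n + (R:ℤ) : ℤ):ℝ) - (n:ℝ)| = (R:ℝ) := by
      push_cast; simp
    have : (D n : ℝ) = (f (n + R) : ℝ) - f n := by
      rw [hDdef]; push_cast; ring
    rw [this, hQdef, div_eq_inv_mul]
    calc L⁻¹ * (R:ℝ) - A = L⁻¹ * |((n + (R:ℤ) : ℤ):ℝ) - (n:ℝ)| - A := by rw [h2]
    _ ≤ _ := h1
  have hDstep : ∀ n : ℤ, |(D (n+1) : ℝ) - D n| ≤ 2*(L+A) := by
    intro n
    have h1 := habs (n + 1 + R) (n + R)
    have h2 := habs (n + 1) n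
    have e1 : |((n + 1 + (R:ℤ) : ℤ):ℝ) - ((n + (R:ℤ) : ℤ):ℝ)| = 1 := by push_cast; simp
    have e2 : |((n + 1 : ℤ):ℝ) - (n:ℝ)| = 1 := by push_cast; simp
    rw [e1] at h1; rw [e2] at h2
    have : (D (n+1) : ℝ) - D n
        = ((f (n+1+R) : ℝ) - f (n+R)) - ((f (n+1) : ℝ) - f n) := by
      rw [hDdef]; push_cast; ring
    rw [this]
    calc |((f (n+1+R) : ℝ) - f (n+R)) - ((f (n+1) : ℝ) - f n)|
        ≤ |(f (n+1+R) : ℝ) - f (n+R)| + |(f (n+1) : ℝ) - f n| := abs_sub _ _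
    _ ≤ (L * 1 + A) + (L * 1 + A) := add_le_add h1 h2
    _ = 2*(L+A) := by ring
  set ε : ℤ := if 0 < D 0 then 1 else -1 with hεdef
  have hε1 : ε = 1 ∨ ε = -1 := by
    rw [hεdef]; split <;> simp
  have hDne : ∀ n, D n ≠ 0 := by
    intro n h
    have := hDlow n
    rw [h] at this; simp at this; linarith
  have habs_of_pos : ∀ n : ℤ, 0 < ε * D n → Q ≤ (ε : ℝ) * D n := by
    intro n hpos
    have h1 : ((ε * D n : ℤ) : ℝ) = |((ε * D n : ℤ) : ℝ)| := by
      rw [abs_of_pos]; exact_mod_cast hpos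
    have h2 : |((ε * D n : ℤ) : ℝ)| = |(D n : ℝ)| := by
      push_cast
      rw [abs_mul]
      rcases hε1 with h | h <;> rw [h] <;> simp
    calc Q ≤ |(D n : ℝ)| := hDlow n
    _ = ((ε * D n : ℤ) : ℝ) := by rw [h1, h2]
    _ = (ε : ℝ) * D n := by push_cast; ring
  have hstep_up : ∀ n : ℤ, 0 < ε * D n → 0 < ε * D (n+1) := by
    intro n hpos
    have h1 := habs_of_pos n hpos
    have h2 := hDstep n
    have h3 : (ε:ℝ) * D (n+1) = (ε:ℝ) * D n + (ε:ℝ) * ((D (n+1) : ℝ) - D n) := by ring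
    have h4 : (ε:ℝ) * ((D (n+1) : ℝ) - D n) ≥ -(2*(L+A)) := by
      have : |(ε:ℝ) * ((D (n+1) : ℝ) - D n)| ≤ 2*(L+A) := by
        rw [abs_mul]
        rcases hε1 with h | h <;> rw [h] <;> simpa using h2
      linarith [neg_abs_le ((ε:ℝ) * ((D (n+1) : ℝ) - D n))]
    have : (0:ℝ) < (ε:ℝ) * D (n+1) := by rw [h3]; linarith
    have : (0:ℝ) < ((ε * D (n+1) : ℤ) : ℝ) := by push_cast; linarith
    exact_mod_cast this
  have hstep_dn : ∀ n : ℤ, 0 < ε * D n → 0 < ε * D (n-1) := by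
    intro n hpos
    have h1 := habs_of_pos n hpos
    have h2 := hDstep (n-1)
    rw [sub_add_cancel] at h2
    have h4 : (ε:ℝ) * ((D n : ℝ) - D (n-1)) ≤ 2*(L+A) := by
      have : |(ε:ℝ) * ((D n : ℝ) - D (n-1))| ≤ 2*(L+A) := by
        rw [abs_mul]
        rcases hε1 with h | h <;> rw [h] <;> simpa using h2
      linarith [le_abs_self ((ε:ℝ) * ((D n : ℝ) - D (n-1)))]
    have h3 : (ε:ℝ) * D (n-1) = (ε:ℝ) * D n - (ε:ℝ) * ((D n : ℝ) - D (n-1)) := by ring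
    have : (0:ℝ) < (ε:ℝ) * D (n-1) := by rw [h3]; linarith
    have : (0:ℝ) < ((ε * D (n-1) : ℤ) : ℝ) := by push_cast; linarith
    exact_mod_cast this
  have hbase : 0 < ε * D 0 := by
    rw [hεdef]
    rcases lt_trichotomy 0 (D 0) with h | h | h
    · rw [if_pos h]; simpa using h
    · exact absurd h.symm (hDne 0)
    · rw [if_neg (by omega)]; omega
  have hsgn : ∀ n : ℤ, 0 < ε * D n := by
    intro n
    induction n using Int.induction_on with
    | zero => exact hbase
    | succ i ih => exact hstep_up i ih
    | pred i ih => exact hstep_dn (-(i:ℤ)) ih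
  have hkey : ∀ n : ℤ, Q ≤ (ε : ℝ) * D n := fun n => habs_of_pos n (hsgn n)
  -- step lemma: going up k*R steps never decreases (in ε-direction)
  have kstep : ∀ (m : ℤ) (k : ℕ), 0 ≤ (ε:ℝ) * ((f (m + (k:ℤ)*R) : ℝ) - f m) := by
    intro m k
    induction k with
    | zero => simp
    | succ k ih =>
      have e1 : m + ((k:ℤ)+1)*R = (m + (k:ℤ)*R) + R := by ring
      have h2 := hkey (m + (k:ℤ)*R)
      have h3 : (D (m + (k:ℤ)*R) : ℝ) = (f (m + ((k:ℤ)+1)*R) : ℝ) - f (m + (k:ℤ)*R) := by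
        simp only [hDdef]
        rw [← e1]
        push_cast
        ring
      have hsplit : (ε:ℝ) * ((f (m + ((k:ℤ)+1)*R) : ℝ) - f m)
          = (ε:ℝ) * ((f (m + ((k:ℤ)+1)*R) : ℝ) - f (m + (k:ℤ)*R))
            + (ε:ℝ) * ((f (m + (k:ℤ)*R) : ℝ) - f m) := by ring
      have hgoal : (0:ℝ) ≤ (ε:ℝ) * ((f (m + ((k:ℤ)+1)*R) : ℝ) - f m) := by
        rw [hsplit, ← h3]; linarith
      push_cast
      push_cast at hgoal
      linarith
  have hRposZ : (0:ℤ) < (R:ℤ) := by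
    have : 0 < R := Nat.succ_pos _
    exact_mod_cast this
  have mono : ∀ m n : ℤ, m ≤ n → -(C1 L A) ≤ (ε:ℝ) * ((f n:ℝ) - f m) := by
    intro m n hmn
    have hk0 : 0 ≤ (n - m) / (R:ℤ) := Int.ediv_nonneg (by omega) (le_of_lt hRposZ)
    obtain ⟨k', hk'⟩ : ∃ k' : ℕ, (n - m) / (R:ℤ) = (k' : ℤ) :=
      ⟨((n - m) / (R:ℤ)).toNat, (Int.toNat_of_nonneg hk0).symm⟩
    set r : ℤ := (n - m) % (R:ℤ) with hr
    have hr0 : 0 ≤ r := Int.emod_nonneg _ (by omega)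
    have hrR : r < R := Int.emod_lt_of_pos _ hRposZ
    have hnm : n = (m + (k' : ℤ) * R) + r := by
      have h := Int.mul_ediv_add_emod (n - m) (R:ℤ)
      rw [hk'] at h
      have : ((R:ℤ)) * (k' : ℤ) = (k' : ℤ) * (R : ℤ) := mul_comm _ _
      omega
    have h1 := kstep m k'
    have h2 := habs n (m + (k':ℤ) * R)
    have e2 : |(n:ℝ) - ((m + (k':ℤ)*R : ℤ):ℝ)| = (r:ℝ) := by
      rw [hnm]; push_cast
      rw [show ((m:ℝ) + (k':ℝ)*(R:ℝ) + (r:ℝ)) - ((m:ℝ) + (k':ℝ)*(R:ℝ)) = (r:ℝ) by ring]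
      rw [abs_of_nonneg (by exact_mod_cast hr0)]
    rw [e2] at h2
    have h3 : (ε:ℝ) * ((f n:ℝ) - f (m + (k':ℤ)*R)) ≥ -(L * r + A) := by
      have : |(ε:ℝ) * ((f n:ℝ) - f (m + (k':ℤ)*R))| ≤ L * r + A := by
        rw [abs_mul]
        rcases hε1 with h | h <;> rw [h] <;> simpa using h2
      linarith [neg_abs_le ((ε:ℝ) * ((f n:ℝ) - f (m + (k':ℤ)*R)))]
    have h4 : (ε:ℝ) * ((f n:ℝ) - f m) = (ε:ℝ) * ((f n:ℝ) - f (m + (k':ℤ)*R))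
        + (ε:ℝ) * ((f (m + (k':ℤ)*R):ℝ) - f m) := by ring
    have hrRR : (r:ℝ) ≤ (R:ℝ) := by exact_mod_cast le_of_lt hrR
    have : L * r + A ≤ C1 L A := by
      rw [C1, ← hRdef]; nlinarith
    rw [h4]; linarith
  set c : ℤ := ⌈C1 L A⌉ with hc
  have monoZ : ∀ m n : ℤ, m ≤ n → -c ≤ ε * (f n - f m) := by
    intro m n hmn
    have h1 := mono m n hmn
    have h2 : -(c:ℝ) ≤ (ε:ℝ) * ((f n:ℝ) - f m) := by
      have := Int.le_ceil (C1 L A)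
      rw [hc]; push_cast; linarith
    have h3 : ((ε * (f n - f m) : ℤ) : ℝ) = (ε:ℝ) * ((f n:ℝ) - f m) := by push_cast; ring
    rw [← h3] at h2
    exact_mod_cast h2
  have hεne : ε ≠ 0 := by rcases hε1 with h | h <;> simp [h]
  have cnt_lower : ∀ m n : ℤ, m ≤ n → n - m - 2*c ≤ ε * f n - ε * f m := by
    intro m n hmn
    have hmaps : ∀ k ∈ Finset.Icc m n, ε * f k ∈ Finset.Icc (ε * f m - c) (ε * f n + c) := by
      intro k hk
      rw [Finset.mem_Icc] at hk ⊢
      have h1 := monoZ m k hk.1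
      have h2 := monoZ k n hk.2
      rw [mul_sub] at h1 h2
      omega
    have hinj : Set.InjOn (fun k => ε * f k) (Finset.Icc m n) := by
      intro a _ b _ h
      exact f.injective (mul_left_cancel₀ hεne h)
    have hcard := Finset.card_le_card_of_injOn _ hmaps hinj
    rw [Int.card_Icc, Int.card_Icc] at hcard
    set X := ε * f m
    set Y := ε * f n
    omega
  have cnt_upper : ∀ m n : ℤ, m ≤ n → ε * f n - ε * f m ≤ n - m + 2*c + 2 := by
    intro m n hmn
    have hmaps : ∀ y ∈ Finset.Icc (ε * f m + c + 1) (ε * f n - c - 1),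
        f.symm (ε * y) ∈ Finset.Icc m n := by
      intro y hy
      rw [Finset.mem_Icc] at hy ⊢
      have hfx : f (f.symm (ε * y)) = ε * y := f.apply_symm_apply _
      have hεfx : ε * f (f.symm (ε * y)) = y := by
        rw [hfx]; rcases hε1 with h | h <;> rw [h] <;> ring
      constructor
      · by_contra hx
        push_neg at hx
        have h1 := monoZ (f.symm (ε * y)) m (le_of_lt hx)
        rw [mul_sub, hεfx] at h1
        omega
      · by_contra hx
        push_neg at hx
        have h1 := monoZ n (f.symm (ε * y)) (le_of_lt hx)
        rw [mul_sub, hεfx] at h1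
        omega
    have hinj : Set.InjOn (fun y => f.symm (ε * y))
        (Finset.Icc (ε * f m + c + 1) (ε * f n - c - 1)) := by
      intro a _ b _ h
      have := f.symm.injective h
      exact mul_left_cancel₀ hεne this
    have hcard := Finset.card_le_card_of_injOn _ hmaps hinj
    rw [Int.card_Icc, Int.card_Icc] at hcard
    set X := ε * f m
    set Y := ε * f n
    omega
  refine ⟨ε, hε1, ?_⟩
  intro n
  rcases le_or_gt 0 n with hn | hn
  · have h1 := cnt_lower 0 n hn
    have h2 := cnt_upper 0 n hn
    rw [C2, ← hc, abs_le]
    rcases hε1 with h | h <;> rw [h] at h1 h2 ⊢ <;> constructor <;> omega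
  · have h1 := cnt_lower n 0 (le_of_lt hn)
    have h2 := cnt_upper n 0 (le_of_lt hn)
    rw [C2, ← hc, abs_le]
    rcases hε1 with h | h <;> rw [h] at h1 h2 ⊢ <;> constructor <;> omega



/-! ### Ultrafilter limit infrastructure -/

def UU : Ultrafilter ℕ := Ultrafilter.of Filter.atTop

lemma UU_le_atTop : (UU : Filter ℕ) ≤ Filter.atTop := Ultrafilter.of_le _

open Classical in
def ulim (a : ℕ → ℝ) : ℝ :=
  if h : ∃ x, Filter.Tendsto a UU (nhds x) then h.choose else 0

open Classical in
lemma ulim_eq {a : ℕ → ℝ} {x : ℝ} (h : Filter.Tendsto a UU (nhds x)) : ulim a = x := by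
  have hex : ∃ x, Filter.Tendsto a UU (nhds x) := ⟨x, h⟩
  rw [ulim, dif_pos hex]
  exact tendsto_nhds_unique hex.choose_spec h

lemma ulim_tendsto {a : ℕ → ℝ} {B : ℝ} (h : ∀ n, |a n| ≤ B) :
    Filter.Tendsto a UU (nhds (ulim a)) := by
  have hle : (↑(UU.map a) : Filter ℝ) ≤ Filter.principal (Set.Icc (-B) B) := by
    rw [Filter.le_principal_iff]
    exact Filter.mem_map.mpr (Filter.univ_mem'
      (fun n => Set.mem_Icc.mpr (abs_le.mp (h n))))
  obtain ⟨x, -, hx⟩ := isCompact_Icc.ultrafilter_le_nhds (UU.map a) hle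
  have hx' : Filter.Tendsto a UU (nhds x) := by
    have h2 : Filter.map a (UU : Filter ℕ) ≤ nhds x := by
      rw [← Ultrafilter.coe_map]; exact hx
    exact h2
  rw [ulim_eq hx']; exact hx'

/-! ### The action section -/

section Action

variable {L A : ℝ} {G : Type} [Group G] (ρ : G →* Equiv.Perm ℤ)
  (hQ : ∀ g : G, IsQIZ L A ⇑(ρ g))

include hQ

lemma hyp_hA : 0 ≤ A := by
  obtain ⟨m, hm⟩ := (hQ 1).2 0
  exact le_trans (abs_nonneg _) hm

lemma hyp_hL : 1 ≤ L := by
  by_contra hcon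
  push_neg at hcon
  have hA := hyp_hA ρ hQ
  have h1L : 0 < 1 - L := by linarith
  set m : ℤ := ⌈A/(1-L)⌉ + 1 with hm
  have hm1 : (1:ℤ) ≤ m := by
    have : (0:ℤ) ≤ ⌈A/(1-L)⌉ := Int.ceil_nonneg (by positivity)
    omega
  have hmgt : A/(1-L) < (m:ℝ) := by
    have := Int.le_ceil (A/(1-L))
    have h2 : ((⌈A/(1-L)⌉ : ℤ) : ℝ) < (m:ℝ) := by exact_mod_cast by omega
    linarith
  have h2 : |(m:ℝ)| ≤ L * |(m:ℝ)| + A := by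
    have := ((hQ 1).1 m 0).2
    simpa using this
  have hmR : (0:ℝ) < (m:ℝ) := by exact_mod_cast hm1
  rw [abs_of_pos hmR] at h2
  rw [div_lt_iff₀ h1L] at hmgt
  nlinarith

def eps (g : G) : ℤ :=
  (rigid L A (hyp_hL ρ hQ) (hyp_hA ρ hQ) (ρ g) (fun m n => (hQ g).1 m n)).choose

def tg (g : G) : ℤ := ρ g 0

lemma eps_pm (g : G) : eps ρ hQ g = 1 ∨ eps ρ hQ g = -1 :=
  (rigid L A (hyp_hL ρ hQ) (hyp_hA ρ hQ) (ρ g) (fun m n => (hQ g).1 m n)).choose_spec.1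

lemma eps_bound (g : G) (n : ℤ) :
    |ρ g n - (eps ρ hQ g * n + tg ρ g)| ≤ C2 L A :=
  (rigid L A (hyp_hL ρ hQ) (hyp_hA ρ hQ) (ρ g) (fun m n => (hQ g).1 m n)).choose_spec.2 n

lemma eps_abs (g : G) : |eps ρ hQ g| = 1 := by
  rcases eps_pm ρ hQ g with h | h <;> rw [h] <;> decide

lemma C2_ge : (2:ℤ) ≤ C2 L A := by
  have hL := hyp_hL ρ hQ
  have hA := hyp_hA ρ hQ
  have hC1 : (0:ℝ) ≤ C1 L A := by
    rw [C1]
    have : (0:ℝ) ≤ (Rr L A : ℝ) := Nat.cast_nonneg _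
    nlinarith
  have : (0:ℤ) ≤ ⌈C1 L A⌉ := Int.ceil_nonneg hC1
  rw [C2]; omega

omit hQ in
lemma bounded_linear_zero (e K : ℤ) (h : ∀ n : ℤ, |e * n| ≤ K) : e = 0 := by
  by_contra hne
  have h1 : 1 ≤ |e| := Int.one_le_abs (by omega)
  have h2 := h (|K| + 1)
  rw [abs_mul] at h2
  have h3 : |(|K| + 1 : ℤ)| = |K| + 1 := by
    rw [abs_of_nonneg]; positivity
  rw [h3] at h2
  nlinarith [le_abs_self K, abs_nonneg K]

omit hQ in
lemma rho_mul_apply (g h : G) (n : ℤ) : ρ (g * h) n = ρ g (ρ h n) := by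
  rw [map_mul]; rfl

lemma eps_mul (g h : G) : eps ρ hQ (g * h) = eps ρ hQ g * eps ρ hQ h := by
  have he1 : |eps ρ hQ g| = 1 := eps_abs ρ hQ g
  set e1 := eps ρ hQ g
  set e2 := eps ρ hQ h
  set e3 := eps ρ hQ (g * h)
  set t1 := tg ρ g
  set t2 := tg ρ h
  set t3 := tg ρ (g * h)
  have key : ∀ n : ℤ, |(e3 - e1 * e2) * n| ≤ 3 * C2 L A + |t3 - (e1 * t2 + t1)| := by
    intro n
    have h3 := eps_bound ρ hQ (g * h) n
    have h1 := eps_bound ρ hQ g (ρ h n)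
    have h2 := eps_bound ρ hQ h n
    have hcomp := rho_mul_apply ρ g h n
    have h2' : |e1 * (ρ h n - (e2 * n + t2))| ≤ C2 L A := by
      rw [abs_mul, he1, one_mul]; exact h2
    have hcomb : |ρ (g * h) n - (e1 * e2 * n + (e1 * t2 + t1))| ≤ 2 * C2 L A := by
      have heq : ρ (g * h) n - (e1 * e2 * n + (e1 * t2 + t1))
          = (ρ g (ρ h n) - (e1 * (ρ h n) + t1)) + e1 * (ρ h n - (e2 * n + t2)) := by
        rw [hcomp]; ring
      rw [heq]
      calc |(ρ g (ρ h n) - (e1 * (ρ h n) + t1)) + e1 * (ρ h n - (e2 * n + t2))|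
          ≤ |ρ g (ρ h n) - (e1 * (ρ h n) + t1)| + |e1 * (ρ h n - (e2 * n + t2))| := abs_add_le _ _
        _ ≤ C2 L A + C2 L A := add_le_add h1 h2'
        _ = 2 * C2 L A := by ring
    have heq2 : (e3 - e1 * e2) * n
        = (ρ (g * h) n - (e1 * e2 * n + (e1 * t2 + t1)))
          - (ρ (g * h) n - (e3 * n + t3)) - (t3 - (e1 * t2 + t1)) := by ring
    rw [heq2]
    calc |(ρ (g * h) n - (e1 * e2 * n + (e1 * t2 + t1)))
          - (ρ (g * h) n - (e3 * n + t3)) - (t3 - (e1 * t2 + t1))|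
        ≤ |(ρ (g * h) n - (e1 * e2 * n + (e1 * t2 + t1)))
          - (ρ (g * h) n - (e3 * n + t3))| + |t3 - (e1 * t2 + t1)| := abs_sub _ _
      _ ≤ (|ρ (g * h) n - (e1 * e2 * n + (e1 * t2 + t1))|
          + |ρ (g * h) n - (e3 * n + t3)|) + |t3 - (e1 * t2 + t1)| := by
            have := abs_sub (ρ (g * h) n - (e1 * e2 * n + (e1 * t2 + t1)))
              (ρ (g * h) n - (e3 * n + t3))
            linarith
      _ ≤ (2 * C2 L A + C2 L A) + |t3 - (e1 * t2 + t1)| := by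
            have := eps_bound ρ hQ (g * h) n
            linarith [hcomb]
      _ = 3 * C2 L A + |t3 - (e1 * t2 + t1)| := by ring
  have := bounded_linear_zero (e3 - e1 * e2) _ key
  omega

lemma eps_one : eps ρ hQ (1 : G) = 1 := by
  have h1 := eps_mul ρ hQ (1 : G) 1
  rw [mul_one] at h1
  rcases eps_pm ρ hQ (1 : G) with h | h
  · exact h
  · rw [h] at h1; norm_num at h1

lemma eps_inv (h : G) : eps ρ hQ h⁻¹ = eps ρ hQ h := by
  have h1 := eps_mul ρ hQ h⁻¹ h
  rw [inv_mul_cancel, eps_one] at h1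
  rcases eps_pm ρ hQ h⁻¹ with h' | h' <;> rcases eps_pm ρ hQ h with h'' | h'' <;>
    rw [h', h''] at h1 ⊢ <;> omega

def phi (g : G) (x : ℤ) : ℝ := ((ρ g x : ℤ) : ℝ) - (eps ρ hQ g : ℝ) * x

lemma phi_bound (g : G) (x : ℤ) :
    |phi ρ hQ g x - (tg ρ g : ℝ)| ≤ ((C2 L A : ℤ) : ℝ) := by
  have h := eps_bound ρ hQ g x
  have : ((|ρ g x - (eps ρ hQ g * x + tg ρ g)| : ℤ) : ℝ) ≤ ((C2 L A : ℤ) : ℝ) := by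
    exact_mod_cast h
  rw [Int.cast_abs] at this
  rw [phi]
  push_cast at this ⊢
  rw [sub_sub]
  exact this

lemma phi_abs (g : G) (x : ℤ) :
    |phi ρ hQ g x| ≤ ((C2 L A : ℤ) : ℝ) + |(tg ρ g : ℤ)| := by
  have h := phi_bound ρ hQ g x
  have : |phi ρ hQ g x| ≤ |phi ρ hQ g x - (tg ρ g : ℝ)| + |(tg ρ g : ℝ)| := by
    calc |phi ρ hQ g x| = |(phi ρ hQ g x - (tg ρ g : ℝ)) + (tg ρ g : ℝ)| := by ring_nf
      _ ≤ _ := abs_add_le _ _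
    
  have hcast : |((tg ρ g : ℤ) : ℝ)| = ((|tg ρ g| : ℤ) : ℝ) := by
    rw [Int.cast_abs]
  push_cast at this ⊢
  linarith

def Tavg (g : G) (N : ℕ) : ℝ :=
  (∑ m ∈ Finset.Icc (-(N:ℤ)) (N:ℤ), phi ρ hQ g m) / (2*(N:ℝ)+1)

omit hQ in
lemma Icc_card (N : ℕ) : (Finset.Icc (-(N:ℤ)) (N:ℤ)).card = 2*N+1 := by
  rw [Int.card_Icc]; omega

lemma Tavg_bound (g : G) (N : ℕ) : |Tavg ρ hQ g N - (tg ρ g : ℝ)| ≤ ((C2 L A : ℤ) : ℝ) := by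
  have hpos : (0:ℝ) < 2*(N:ℝ)+1 := by positivity
  have hsum : Tavg ρ hQ g N - (tg ρ g : ℝ)
      = (∑ m ∈ Finset.Icc (-(N:ℤ)) (N:ℤ), (phi ρ hQ g m - (tg ρ g : ℝ))) / (2*(N:ℝ)+1) := by
    rw [Finset.sum_sub_distrib, Finset.sum_const, Icc_card, Tavg]
    field_simp
    try ring
  rw [hsum, abs_div, abs_of_pos hpos, div_le_iff₀ hpos]
  calc |∑ m ∈ Finset.Icc (-(N:ℤ)) (N:ℤ), (phi ρ hQ g m - (tg ρ g : ℝ))|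
      ≤ ∑ m ∈ Finset.Icc (-(N:ℤ)) (N:ℤ), |phi ρ hQ g m - (tg ρ g : ℝ)| :=
        Finset.abs_sum_le_sum_abs _ _
    _ ≤ (Finset.Icc (-(N:ℤ)) (N:ℤ)).card • ((C2 L A : ℤ) : ℝ) :=
        Finset.sum_le_card_nsmul _ _ _ (fun x _ => phi_bound ρ hQ g x)
    _ = ((C2 L A : ℤ) : ℝ) * (2*(N:ℝ)+1) := by rw [Icc_card]; push_cast; ring

lemma Tavg_abs (g : G) (N : ℕ) :
    |Tavg ρ hQ g N| ≤ ((C2 L A : ℤ) : ℝ) + |((tg ρ g : ℤ) : ℝ)| := by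
  have h := Tavg_bound ρ hQ g N
  calc |Tavg ρ hQ g N| = |(Tavg ρ hQ g N - (tg ρ g : ℝ)) + (tg ρ g : ℝ)| := by ring_nf
    _ ≤ |Tavg ρ hQ g N - (tg ρ g : ℝ)| + |((tg ρ g : ℤ) : ℝ)| := abs_add_le _ _
    _ ≤ _ := by linarith

def Tfun (g : G) : ℝ := ulim (Tavg ρ hQ g)

lemma Tfun_tendsto (g : G) : Filter.Tendsto (Tavg ρ hQ g) UU (nhds (Tfun ρ hQ g)) :=
  ulim_tendsto (Tavg_abs ρ hQ g)

lemma Tfun_near (g : G) : |Tfun ρ hQ g - (tg ρ g : ℝ)| ≤ ((C2 L A : ℤ) : ℝ) := by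
  have h1 : Filter.Tendsto (fun N => |Tavg ρ hQ g N - (tg ρ g : ℝ)|) UU
      (nhds |Tfun ρ hQ g - (tg ρ g : ℝ)|) :=
    ((Tfun_tendsto ρ hQ g).sub tendsto_const_nhds).abs
  exact le_of_tendsto h1 (Filter.Eventually.of_forall (fun N => Tavg_bound ρ hQ g N))


omit hQ in
lemma sub_sum (φ : ℤ → ℝ) (B : ℝ) (hB : ∀ x, |φ x| ≤ B) {W I' : Finset ℤ} (hWI : W ⊆ I') :
    |∑ m ∈ I', φ m - ∑ m ∈ W, φ m| ≤ ((I'.card - W.card : ℕ) : ℝ) * B := by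
  have h1 : ∑ m ∈ I', φ m - ∑ m ∈ W, φ m = ∑ m ∈ I' \ W, φ m := by
    rw [← Finset.sum_sdiff hWI]; ring
  rw [h1]
  calc |∑ m ∈ I' \ W, φ m| ≤ ∑ m ∈ I' \ W, |φ m| := Finset.abs_sum_le_sum_abs _ _
    _ ≤ (I' \ W).card • B := Finset.sum_le_card_nsmul _ _ _ (fun x _ => hB x)
    _ = ((I'.card - W.card : ℕ) : ℝ) * B := by
        rw [Finset.card_sdiff_of_subset hWI, nsmul_eq_mul]

lemma Tfun_mul (g h : G) :
    Tfun ρ hQ (g * h) = Tfun ρ hQ g + (eps ρ hQ g : ℝ) * Tfun ρ hQ h := by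
  have hC2 := C2_ge ρ hQ
  set ch : ℕ := (C2 L A + |tg ρ h|).toNat with hchdef
  have hch : (ch : ℤ) = C2 L A + |tg ρ h| := by
    rw [hchdef]
    have := abs_nonneg (tg ρ h)
    exact Int.toNat_of_nonneg (by omega)
  have hB : ∀ x, |phi ρ hQ g x| ≤ ((C2 L A : ℤ) : ℝ) + ((|tg ρ g| : ℤ) : ℝ) := by
    intro x
    have := phi_abs ρ hQ g x
    push_cast at this ⊢
    linarith
  set B : ℝ := ((C2 L A : ℤ) : ℝ) + ((|tg ρ g| : ℤ) : ℝ) with hBdef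
  have hB0 : 0 ≤ B := le_trans (abs_nonneg _) (hB 0)
  have himg : ∀ N : ℕ, Finset.image (⇑(ρ h)) (Finset.Icc (-(N:ℤ)) (N:ℤ))
      ⊆ Finset.Icc (-(N:ℤ) - ch) ((N:ℤ) + ch) := by
    intro N k hk
    rw [Finset.mem_image] at hk
    obtain ⟨m, hm, rfl⟩ := hk
    rw [Finset.mem_Icc] at hm ⊢
    have hb := eps_bound ρ hQ h m
    rw [abs_le] at hb
    have h1 := le_abs_self (tg ρ h)
    have h2 := neg_abs_le (tg ρ h)
    rcases eps_pm ρ hQ h with he | he <;> rw [he] at hb <;> omega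
  have hIsub : ∀ N : ℕ, Finset.Icc (-(N:ℤ)) (N:ℤ) ⊆ Finset.Icc (-(N:ℤ) - ch) ((N:ℤ) + ch) := by
    intro N k hk
    rw [Finset.mem_Icc] at hk ⊢
    omega
  have hcard' : ∀ N : ℕ, (Finset.Icc (-(N:ℤ) - ch) ((N:ℤ) + ch)).card = 2*N + 2*ch + 1 := by
    intro N; rw [Int.card_Icc]; omega
  have hcardim : ∀ N : ℕ, (Finset.image (⇑(ρ h)) (Finset.Icc (-(N:ℤ)) (N:ℤ))).card = 2*N+1 := by
    intro N; rw [Finset.card_image_of_injective _ (ρ h).injective, Icc_card]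
  have hnum : ∀ N : ℕ, |∑ m ∈ Finset.Icc (-(N:ℤ)) (N:ℤ), phi ρ hQ g (ρ h m)
      - ∑ m ∈ Finset.Icc (-(N:ℤ)) (N:ℤ), phi ρ hQ g m| ≤ (4*(ch:ℝ)) * B := by
    intro N
    have e1 : ∑ m ∈ Finset.Icc (-(N:ℤ)) (N:ℤ), phi ρ hQ g (ρ h m)
        = ∑ k ∈ Finset.image (⇑(ρ h)) (Finset.Icc (-(N:ℤ)) (N:ℤ)), phi ρ hQ g k := by
      rw [Finset.sum_image (fun x _ y _ hxy => (ρ h).injective hxy)]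
    have d1 := sub_sum (phi ρ hQ g) B hB (himg N)
    have d2 := sub_sum (phi ρ hQ g) B hB (hIsub N)
    rw [hcard', hcardim] at d1
    rw [hcard', Icc_card] at d2
    have hc1 : (2*N + 2*ch + 1 - (2*N+1) : ℕ) = 2*ch := by omega
    rw [hc1] at d1 d2
    rw [e1]
    set S1 := ∑ k ∈ Finset.image (⇑(ρ h)) (Finset.Icc (-(N:ℤ)) (N:ℤ)), phi ρ hQ g k
    set S2 := ∑ m ∈ Finset.Icc (-(N:ℤ)) (N:ℤ), phi ρ hQ g m
    set S3 := ∑ m ∈ Finset.Icc (-(N:ℤ) - ch) ((N:ℤ) + ch), phi ρ hQ g m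
    have habs : |S1 - S2| ≤ |S3 - S2| + |S3 - S1| := by
      have he : S1 - S2 = (S3 - S2) - (S3 - S1) := by ring
      rw [he]
      exact abs_sub (S3 - S2) (S3 - S1)
    push_cast at d1 d2
    push_cast
    linarith
  have hdenom : Filter.Tendsto (fun N : ℕ => 2*(N:ℝ)+1) Filter.atTop Filter.atTop := by
    apply Filter.tendsto_atTop_add_const_right
    exact (tendsto_natCast_atTop_atTop).const_mul_atTop two_pos
  have hstep2 : Filter.Tendsto (fun N : ℕ =>
      (∑ m ∈ Finset.Icc (-(N:ℤ)) (N:ℤ), phi ρ hQ g (ρ h m)) / (2*(N:ℝ)+1)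
        - Tavg ρ hQ g N) Filter.atTop (nhds 0) := by
    have hgl : Filter.Tendsto (fun N : ℕ => (4*(ch:ℝ)) * B / (2*(N:ℝ)+1))
        Filter.atTop (nhds 0) := (tendsto_const_nhds).div_atTop hdenom
    refine squeeze_zero_norm ?_ hgl
    intro N
    have hpos : (0:ℝ) < 2*(N:ℝ)+1 := by positivity
    rw [Real.norm_eq_abs, Tavg, div_sub_div_same, abs_div, abs_of_pos hpos,
      div_le_div_iff₀ hpos hpos]
    have := hnum N
    nlinarith [abs_nonneg (∑ m ∈ Finset.Icc (-(N:ℤ)) (N:ℤ), phi ρ hQ g (ρ h m)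
      - ∑ m ∈ Finset.Icc (-(N:ℤ)) (N:ℤ), phi ρ hQ g m)]
  have hdecomp : ∀ N : ℕ, Tavg ρ hQ (g*h) N
      = Tavg ρ hQ g N
        + ((∑ m ∈ Finset.Icc (-(N:ℤ)) (N:ℤ), phi ρ hQ g (ρ h m)) / (2*(N:ℝ)+1)
          - Tavg ρ hQ g N)
        + (eps ρ hQ g : ℝ) * Tavg ρ hQ h N := by
    intro N
    have hpoint : ∀ m : ℤ, phi ρ hQ (g*h) m
        = phi ρ hQ g (ρ h m) + (eps ρ hQ g : ℝ) * phi ρ hQ h m := by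
      intro m
      simp only [phi]
      rw [rho_mul_apply, eps_mul]
      push_cast
      ring
    simp only [Tavg]
    rw [Finset.sum_congr rfl (fun m _ => hpoint m), Finset.sum_add_distrib, ← Finset.mul_sum]
    field_simp
    try ring
  have hlim : Filter.Tendsto (Tavg ρ hQ (g*h)) UU
      (nhds (Tfun ρ hQ g + 0 + (eps ρ hQ g : ℝ) * Tfun ρ hQ h)) := by
    have h1 := Tfun_tendsto ρ hQ g
    have h2 := (Tfun_tendsto ρ hQ h).const_mul ((eps ρ hQ g : ℝ))
    have h3 := hstep2.mono_left UU_le_atTop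
    have h4 := (h1.add h3).add h2
    exact Filter.Tendsto.congr (fun N => (hdecomp N).symm) h4
  have h5 := ulim_eq hlim
  rw [Tfun, h5]
  ring

lemma Tfun_one : Tfun ρ hQ (1 : G) = 0 := by
  have hz : ∀ N, Tavg ρ hQ (1 : G) N = 0 := by
    intro N
    rw [Tavg]
    have : ∀ m ∈ Finset.Icc (-(N:ℤ)) (N:ℤ), phi ρ hQ (1 : G) m = 0 := by
      intro m _
      rw [phi, eps_one]
      simp
    rw [Finset.sum_congr rfl this, Finset.sum_const_zero, zero_div]
  have : Filter.Tendsto (Tavg ρ hQ (1 : G)) UU (nhds 0) := by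
    rw [show (Tavg ρ hQ (1:G)) = (fun _ => (0:ℝ)) from funext hz]
    exact tendsto_const_nhds
  rw [Tfun, ulim_eq this]

lemma Tfun_inv (h : G) : Tfun ρ hQ h⁻¹ = -((eps ρ hQ h : ℝ)) * Tfun ρ hQ h := by
  have h1 := Tfun_mul ρ hQ h⁻¹ h
  rw [inv_mul_cancel, Tfun_one, eps_inv] at h1
  linarith

/-! ### The equivariant real coordinate F -/

def SX (n : ℤ) : Set ℝ :=
  Set.range (fun g : G => (eps ρ hQ g : ℝ) * ((ρ g n : ℤ) - Tfun ρ hQ g))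

def c2R (L A : ℝ) : ℝ := ((C2 L A : ℤ) : ℝ)

omit hQ in
lemma int_abs_le_real {a b : ℤ} (h : |a| ≤ b) : |(a:ℝ)| ≤ (b:ℝ) := by exact_mod_cast h

lemma SX_mem_bound (n : ℤ) : ∀ x ∈ SX ρ hQ n, |x - (n:ℝ)| ≤ 2 * c2R L A := by
  rintro x ⟨g, rfl⟩
  dsimp only
  have h1 := int_abs_le_real (eps_bound ρ hQ g n)
  push_cast at h1
  have h2 := Tfun_near ρ hQ g
  rw [abs_le] at h1 h2
  simp only [c2R]
  rcases eps_pm ρ hQ g with he | he <;>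
    rw [he] <;> rw [he] at h1 <;> push_cast at h1 ⊢ <;>
    rw [abs_le] <;> constructor <;> linarith [h1.1, h1.2, h2.1, h2.2]

lemma SX_self_mem (n : ℤ) : (n:ℝ) ∈ SX ρ hQ n := by
  refine ⟨1, ?_⟩
  dsimp only
  rw [eps_one, Tfun_one]
  simp

lemma SX_bddAbove (n : ℤ) : BddAbove (SX ρ hQ n) := by
  refine ⟨(n:ℝ) + 2 * c2R L A, ?_⟩
  intro x hx
  have := SX_mem_bound ρ hQ n x hx
  rw [abs_le] at this
  linarith [this.2]

lemma SX_bddBelow (n : ℤ) : BddBelow (SX ρ hQ n) := by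
  refine ⟨(n:ℝ) - 2 * c2R L A, ?_⟩
  intro x hx
  have := SX_mem_bound ρ hQ n x hx
  rw [abs_le] at this
  linarith [this.1]

def Ff (n : ℤ) : ℝ := (sSup (SX ρ hQ n) + sInf (SX ρ hQ n)) / 2

lemma Ff_close (n : ℤ) : |Ff ρ hQ n - (n:ℝ)| ≤ 2 * c2R L A := by
  have h1 : sSup (SX ρ hQ n) ≤ (n:ℝ) + 2 * c2R L A := by
    apply csSup_le ⟨_, SX_self_mem ρ hQ n⟩
    intro x hx
    have := SX_mem_bound ρ hQ n x hx
    rw [abs_le] at this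
    linarith [this.2]
  have h2 : (n:ℝ) - 2 * c2R L A ≤ sInf (SX ρ hQ n) := by
    apply le_csInf ⟨_, SX_self_mem ρ hQ n⟩
    intro x hx
    have := SX_mem_bound ρ hQ n x hx
    rw [abs_le] at this
    linarith [this.1]
  have h3 : sInf (SX ρ hQ n) ≤ sSup (SX ρ hQ n) :=
    csInf_le_csSup ⟨_, SX_self_mem ρ hQ n⟩ (SX_bddBelow ρ hQ n) (SX_bddAbove ρ hQ n)
  rw [Ff, abs_le]
  constructor <;> nlinarith


omit hQ in
lemma csSup_add_const (s : Set ℝ) (hne : s.Nonempty) (hb : BddAbove s) (c : ℝ) :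
    sSup ((fun x => x + c) '' s) = sSup s + c := by
  have hbim : BddAbove ((fun x => x + c) '' s) := by
    obtain ⟨b, hb'⟩ := hb
    refine ⟨b + c, ?_⟩
    rintro y ⟨x, hx, rfl⟩
    exact add_le_add_left (hb' hx) c
  apply le_antisymm
  · apply csSup_le (hne.image _)
    rintro y ⟨x, hx, rfl⟩
    exact add_le_add_left (le_csSup hb hx) c
  · have h : ∀ x ∈ s, x ≤ sSup ((fun x => x + c) '' s) - c := by
      intro x hx
      have h2 : x + c ≤ sSup ((fun x => x + c) '' s) := le_csSup hbim ⟨x, hx, rfl⟩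
      linarith
    have := csSup_le hne h
    linarith

omit hQ in
lemma csInf_add_const (s : Set ℝ) (hne : s.Nonempty) (hb : BddBelow s) (c : ℝ) :
    sInf ((fun x => x + c) '' s) = sInf s + c := by
  have hbim : BddBelow ((fun x => x + c) '' s) := by
    obtain ⟨b, hb'⟩ := hb
    refine ⟨b + c, ?_⟩
    rintro y ⟨x, hx, rfl⟩
    exact add_le_add_left (hb' hx) c
  apply le_antisymm
  · have h : ∀ x ∈ s, sInf ((fun x => x + c) '' s) - c ≤ x := by
      intro x hx
      have h2 : sInf ((fun x => x + c) '' s) ≤ x + c := csInf_le hbim ⟨x, hx, rfl⟩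
      linarith
    have := le_csInf hne h
    linarith
  · apply le_csInf (hne.image _)
    rintro y ⟨x, hx, rfl⟩
    exact add_le_add_left (csInf_le hb hx) c

omit hQ in
lemma csSup_neg_const (s : Set ℝ) (hne : s.Nonempty) (hb : BddBelow s) (c : ℝ) :
    sSup ((fun x => -x + c) '' s) = c - sInf s := by
  have hbim : BddAbove ((fun x => -x + c) '' s) := by
    obtain ⟨b, hb'⟩ := hb
    refine ⟨-b + c, ?_⟩
    rintro y ⟨x, hx, rfl⟩
    have := hb' hx
    simp only
    linarith
  apply le_antisymm
  · apply csSup_le (hne.image _)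
    rintro y ⟨x, hx, rfl⟩
    have := csInf_le hb hx
    simp only
    linarith
  · have h : ∀ x ∈ s, c - sSup ((fun x => -x + c) '' s) ≤ x := by
      intro x hx
      have h2 : -x + c ≤ sSup ((fun x => -x + c) '' s) := le_csSup hbim ⟨x, hx, rfl⟩
      linarith
    have := le_csInf hne h
    linarith

omit hQ in
lemma csInf_neg_const (s : Set ℝ) (hne : s.Nonempty) (hb : BddAbove s) (c : ℝ) :
    sInf ((fun x => -x + c) '' s) = c - sSup s := by
  have hbim : BddBelow ((fun x => -x + c) '' s) := by
    obtain ⟨b, hb'⟩ := hb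
    refine ⟨-b + c, ?_⟩
    rintro y ⟨x, hx, rfl⟩
    have := hb' hx
    simp only
    linarith
  apply le_antisymm
  · have h : ∀ x ∈ s, x ≤ c - sInf ((fun x => -x + c) '' s) := by
      intro x hx
      have h2 : sInf ((fun x => -x + c) '' s) ≤ -x + c := csInf_le hbim ⟨x, hx, rfl⟩
      linarith
    have := csSup_le hne h
    linarith
  · apply le_csInf (hne.image _)
    rintro y ⟨x, hx, rfl⟩
    have := le_csSup hb hx
    simp only
    linarith

lemma SX_eq (h : G) (n : ℤ) :
    SX ρ hQ ((ρ h) n) = (fun x => (eps ρ hQ h : ℝ) * x + Tfun ρ hQ h) '' SX ρ hQ n := by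
  ext x
  constructor
  · rintro ⟨g, rfl⟩
    dsimp only
    refine ⟨(eps ρ hQ (g*h) : ℝ) * (((ρ (g*h)) n : ℤ) - Tfun ρ hQ (g*h)), ⟨g*h, rfl⟩, ?_⟩
    have hρ : (ρ (g*h)) n = (ρ g) ((ρ h) n) := rho_mul_apply ρ g h n
    rw [eps_mul ρ hQ g h, Tfun_mul ρ hQ g h, hρ]
    rcases eps_pm ρ hQ g with h1|h1 <;> rcases eps_pm ρ hQ h with h2|h2 <;>
      rw [h1, h2] <;> push_cast <;> ring
  · rintro ⟨y, ⟨g, rfl⟩, rfl⟩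
    dsimp only
    refine ⟨g * h⁻¹, ?_⟩
    dsimp only
    have hρ : (ρ (g*h⁻¹)) ((ρ h) n) = (ρ g) n := by
      rw [← rho_mul_apply, inv_mul_cancel_right]
    rw [hρ, eps_mul ρ hQ g h⁻¹, Tfun_mul ρ hQ g h⁻¹, eps_inv, Tfun_inv]
    rcases eps_pm ρ hQ g with h1|h1 <;> rcases eps_pm ρ hQ h with h2|h2 <;>
      rw [h1, h2] <;> push_cast <;> ring

lemma Ff_equiv (h : G) (n : ℤ) :
    Ff ρ hQ ((ρ h) n) = (eps ρ hQ h : ℝ) * Ff ρ hQ n + Tfun ρ hQ h := by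
  have hne : (SX ρ hQ n).Nonempty := ⟨_, SX_self_mem ρ hQ n⟩
  have hba := SX_bddAbove ρ hQ n
  have hbb := SX_bddBelow ρ hQ n
  rw [Ff, Ff, SX_eq ρ hQ h n]
  rcases eps_pm ρ hQ h with he|he <;> rw [he]
  · have hfn : (fun x : ℝ => ((1:ℤ):ℝ) * x + Tfun ρ hQ h)
        = (fun x => x + Tfun ρ hQ h) := by
      funext x; push_cast; ring
    rw [hfn, csSup_add_const _ hne hba _, csInf_add_const _ hne hbb _]
    push_cast; ring
  · have hfn : (fun x : ℝ => ((-1:ℤ):ℝ) * x + Tfun ρ hQ h)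
        = (fun x => -x + Tfun ρ hQ h) := by
      funext x; push_cast; ring
    rw [hfn, csSup_neg_const _ hne hbb _, csInf_neg_const _ hne hba _]
    push_cast; ring


/-! ### The value set V and interval counting -/

def Vv : Set ℝ := Set.range (Ff ρ hQ)

def ww (L A : ℝ) : ℝ := 4 * c2R L A + 2

lemma c2R_ge : (2:ℝ) ≤ c2R L A := by
  have := C2_ge ρ hQ
  rw [c2R]
  exact_mod_cast this

lemma ww_pos : (0:ℝ) < ww L A := by
  have := c2R_ge ρ hQ
  rw [ww]; linarith

lemma Vv_locfin (a b : ℝ) : (Vv ρ hQ ∩ Set.Ioc a b).Finite := by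
  apply Set.Finite.subset ((Set.finite_Icc (⌈a - 2*c2R L A⌉) (⌊b + 2*c2R L A⌋)).image
    (fun k : ℤ => Ff ρ hQ k))
  rintro x ⟨⟨k, rfl⟩, hx⟩
  refine ⟨k, ?_, rfl⟩
  rw [Set.mem_Icc]
  have hcl := Ff_close ρ hQ k
  rw [abs_le] at hcl
  rw [Set.mem_Ioc] at hx
  constructor
  · rw [Int.ceil_le]; push_cast; linarith [hx.1]
  · rw [Int.le_floor]; push_cast; linarith [hx.2]

def cnt (a b : ℝ) : ℤ := ((Vv ρ hQ ∩ Set.Ioc a b).ncard : ℤ)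

def dd (a b : ℝ) : ℤ := cnt ρ hQ a b - cnt ρ hQ b a

lemma cnt_zero {a b : ℝ} (h : b ≤ a) : cnt ρ hQ a b = 0 := by
  rw [cnt, Set.Ioc_eq_empty (by exact fun hc => absurd h (not_le.mpr hc)), Set.inter_empty,
    Set.ncard_empty]
  rfl

lemma cnt_nonneg (a b : ℝ) : 0 ≤ cnt ρ hQ a b := Int.ofNat_nonneg _

lemma dd_self (a : ℝ) : dd ρ hQ a a = 0 := by rw [dd]; ring

lemma dd_anti (a b : ℝ) : dd ρ hQ a b = - dd ρ hQ b a := by rw [dd, dd]; ring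

lemma ddsplit {a b c : ℝ} (hab : a ≤ b) (hbc : b ≤ c) :
    dd ρ hQ a c = dd ρ hQ a b + dd ρ hQ b c := by
  have hac : a ≤ c := le_trans hab hbc
  rw [dd, dd, dd, cnt_zero ρ hQ hab, cnt_zero ρ hQ hbc, cnt_zero ρ hQ hac]
  have hsplit : Vv ρ hQ ∩ Set.Ioc a c = (Vv ρ hQ ∩ Set.Ioc a b) ∪ (Vv ρ hQ ∩ Set.Ioc b c) := by
    rw [← Set.inter_union_distrib_left, Set.Ioc_union_Ioc_eq_Ioc hab hbc]
  have hdisj : Disjoint (Vv ρ hQ ∩ Set.Ioc a b) (Vv ρ hQ ∩ Set.Ioc b c) :=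
    Set.disjoint_of_subset Set.inter_subset_right Set.inter_subset_right
      (Set.Ioc_disjoint_Ioc_of_le le_rfl)
  rw [cnt, cnt, cnt, hsplit, Set.ncard_union_eq hdisj (Vv_locfin ρ hQ a b) (Vv_locfin ρ hQ b c)]
  push_cast
  ring

lemma dd_cocycle (a b c : ℝ) : dd ρ hQ a c = dd ρ hQ a b + dd ρ hQ b c := by
  rcases le_total a b with h1|h1 <;> rcases le_total b c with h2|h2 <;>
    rcases le_total a c with h3|h3
  · exact ddsplit ρ hQ h1 h2
  · exact ddsplit ρ hQ h1 h2
  · have := ddsplit ρ hQ h3 h2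
    have h4 := dd_anti ρ hQ b c
    linarith
  · have := ddsplit ρ hQ h3 h1
    have h4 := dd_anti ρ hQ a c
    have h5 := dd_anti ρ hQ b c
    linarith
  · have := ddsplit ρ hQ h1 h3
    have h4 := dd_anti ρ hQ a b
    linarith
  · have := ddsplit ρ hQ h2 h3
    have h4 := dd_anti ρ hQ a b
    have h5 := dd_anti ρ hQ a c
    linarith
  · have := ddsplit ρ hQ h2 h1
    have h4 := dd_anti ρ hQ a b
    have h5 := dd_anti ρ hQ b c
    have h6 := dd_anti ρ hQ a c
    linarith
  · have := ddsplit ρ hQ h2 h1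
    have h4 := dd_anti ρ hQ a b
    have h5 := dd_anti ρ hQ b c
    have h6 := dd_anti ρ hQ a c
    linarith

/-! ### Invariance of V -/

lemma Vv_mem_iff_trans {c : ℝ} (hc : (fun x => x + c) '' Vv ρ hQ = Vv ρ hQ) (x : ℝ) :
    x ∈ Vv ρ hQ ↔ x - c ∈ Vv ρ hQ := by
  constructor
  · intro hx
    have : x - c + c ∈ (fun x => x + c) '' Vv ρ hQ ↔ x - c ∈ Vv ρ hQ := by
      constructor
      · rintro ⟨y, hy, hyy⟩
        simp only at hyy
        have : y = x - c := by linarith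
        rwa [← this]
      · intro h
        exact ⟨x - c, h, rfl⟩
    rw [hc] at this
    apply this.mp
    rwa [show x - c + c = x by ring]
  · intro hx
    rw [← hc]
    exact ⟨x - c, hx, by simp⟩

lemma Vv_trans (h : G) (he : eps ρ hQ h = 1) :
    (fun x => x + Tfun ρ hQ h) '' Vv ρ hQ = Vv ρ hQ := by
  ext x
  constructor
  · rintro ⟨y, ⟨k, rfl⟩, rfl⟩
    refine ⟨(ρ h) k, ?_⟩
    rw [Ff_equiv ρ hQ h k, he]
    push_cast
    ring
  · rintro ⟨k, rfl⟩
    refine ⟨Ff ρ hQ ((ρ h⁻¹) k), ⟨(ρ h⁻¹) k, rfl⟩, ?_⟩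
    rw [Ff_equiv ρ hQ h⁻¹ k, eps_inv ρ hQ h, he, Tfun_inv ρ hQ h, he]
    push_cast
    ring

lemma Vv_refl (h : G) (he : eps ρ hQ h = -1) :
    (fun x => Tfun ρ hQ h - x) '' Vv ρ hQ = Vv ρ hQ := by
  ext x
  constructor
  · rintro ⟨y, ⟨k, rfl⟩, rfl⟩
    refine ⟨(ρ h) k, ?_⟩
    rw [Ff_equiv ρ hQ h k, he]
    push_cast
    ring
  · rintro ⟨k, rfl⟩
    refine ⟨Ff ρ hQ ((ρ h⁻¹) k), ⟨(ρ h⁻¹) k, rfl⟩, ?_⟩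
    rw [Ff_equiv ρ hQ h⁻¹ k, eps_inv ρ hQ h, he, Tfun_inv ρ hQ h, he]
    push_cast
    ring

lemma cnt_trans {c : ℝ} (hc : (fun x => x + c) '' Vv ρ hQ = Vv ρ hQ) (a b : ℝ) :
    cnt ρ hQ (a + c) (b + c) = cnt ρ hQ a b := by
  have hset : Vv ρ hQ ∩ Set.Ioc (a + c) (b + c) = (fun x => x + c) '' (Vv ρ hQ ∩ Set.Ioc a b) := by
    ext x
    simp only [Set.mem_inter_iff, Set.mem_Ioc, Set.mem_image]
    constructor
    · rintro ⟨hxV, hx1, hx2⟩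
      refine ⟨x - c, ⟨(Vv_mem_iff_trans ρ hQ hc x).mp hxV, by linarith, by linarith⟩, by ring⟩
    · rintro ⟨y, ⟨hyV, hy1, hy2⟩, rfl⟩
      refine ⟨?_, by linarith, by linarith⟩
      have := (Vv_mem_iff_trans ρ hQ hc (y + c)).mpr
      apply this
      rwa [show y + c - c = y by ring]
  rw [cnt, cnt, hset, Set.ncard_image_of_injective _ (fun x y hxy => by
    simpa using hxy : Function.Injective (fun x : ℝ => x + c))]

lemma dd_trans {c : ℝ} (hc : (fun x => x + c) '' Vv ρ hQ = Vv ρ hQ) (a b : ℝ) :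
    dd ρ hQ (a + c) (b + c) = dd ρ hQ a b := by
  rw [dd, dd, cnt_trans ρ hQ hc, cnt_trans ρ hQ hc]


lemma Vv_mem_iff_refl {c : ℝ} (hc : (fun x => c - x) '' Vv ρ hQ = Vv ρ hQ) (x : ℝ) :
    x ∈ Vv ρ hQ ↔ c - x ∈ Vv ρ hQ := by
  constructor
  · intro hx
    rw [← hc]
    exact ⟨x, hx, rfl⟩
  · intro hx
    rw [← hc] at hx
    obtain ⟨y, hy, hyy⟩ := hx
    simp only at hyy
    have : y = x := by linarith
    rwa [← this]

lemma Vv_Ioo_fin (a b : ℝ) : (Vv ρ hQ ∩ Set.Ioo a b).Finite :=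
  (Vv_locfin ρ hQ a b).subset (Set.inter_subset_inter_right _ Set.Ioo_subset_Ioc_self)

lemma Ico_Ioc_ncard {a b : ℝ} (ha : a ∈ Vv ρ hQ) (hb : b ∈ Vv ρ hQ) :
    (Vv ρ hQ ∩ Set.Ico a b).ncard = (Vv ρ hQ ∩ Set.Ioc a b).ncard := by
  rcases le_or_gt b a with hba | hab
  · rw [Set.Ico_eq_empty (fun hc => absurd hba (not_le.mpr hc)),
      Set.Ioc_eq_empty (fun hc => absurd hba (not_le.mpr hc))]
  · have h1 : Vv ρ hQ ∩ Set.Ico a b = insert a (Vv ρ hQ ∩ Set.Ioo a b) := by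
      ext x
      simp only [Set.mem_inter_iff, Set.mem_Ico, Set.mem_Ioo, Set.mem_insert_iff]
      constructor
      · rintro ⟨hxV, hx1, hx2⟩
        rcases eq_or_lt_of_le hx1 with h|h
        · exact Or.inl h.symm
        · exact Or.inr ⟨hxV, h, hx2⟩
      · rintro (rfl | ⟨hxV, hx1, hx2⟩)
        · exact ⟨ha, le_refl _, hab⟩
        · exact ⟨hxV, le_of_lt hx1, hx2⟩
    have h2 : Vv ρ hQ ∩ Set.Ioc a b = insert b (Vv ρ hQ ∩ Set.Ioo a b) := by
      ext x
      simp only [Set.mem_inter_iff, Set.mem_Ioc, Set.mem_Ioo, Set.mem_insert_iff]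
      constructor
      · rintro ⟨hxV, hx1, hx2⟩
        rcases eq_or_lt_of_le hx2 with h|h
        · exact Or.inl h
        · exact Or.inr ⟨hxV, hx1, h⟩
      · rintro (rfl | ⟨hxV, hx1, hx2⟩)
        · exact ⟨hb, hab, le_refl _⟩
        · exact ⟨hxV, hx1, le_of_lt hx2⟩
    rw [h1, h2,
      Set.ncard_insert_of_notMem (fun hc => absurd hc.2.1 (lt_irrefl a)) (Vv_Ioo_fin ρ hQ a b),
      Set.ncard_insert_of_notMem (fun hc => absurd hc.2.2 (lt_irrefl b)) (Vv_Ioo_fin ρ hQ a b)]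

lemma cnt_refl {c : ℝ} (hc : (fun x => c - x) '' Vv ρ hQ = Vv ρ hQ) {a b : ℝ}
    (ha : a ∈ Vv ρ hQ) (hb : b ∈ Vv ρ hQ) :
    cnt ρ hQ (c - b) (c - a) = ((Vv ρ hQ ∩ Set.Ico a b).ncard : ℤ) := by
  have hset : Vv ρ hQ ∩ Set.Ioc (c - b) (c - a) = (fun x => c - x) '' (Vv ρ hQ ∩ Set.Ico a b) := by
    ext x
    simp only [Set.mem_inter_iff, Set.mem_Ioc, Set.mem_Ico, Set.mem_image]
    constructor
    · rintro ⟨hxV, hx1, hx2⟩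
      refine ⟨c - x, ⟨?_, by linarith, by linarith⟩, by ring⟩
      exact (Vv_mem_iff_refl ρ hQ hc (c - x)).mpr (by rwa [show c - (c - x) = x by ring])
    · rintro ⟨y, ⟨hyV, hy1, hy2⟩, rfl⟩
      exact ⟨(Vv_mem_iff_refl ρ hQ hc y).mp hyV, by linarith, by linarith⟩
  rw [cnt, hset, Set.ncard_image_of_injective _ (fun x y hxy => by
    simp only at hxy; linarith : Function.Injective (fun x : ℝ => c - x))]

lemma dd_refl {c : ℝ} (hc : (fun x => c - x) '' Vv ρ hQ = Vv ρ hQ) {a b : ℝ}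
    (ha : a ∈ Vv ρ hQ) (hb : b ∈ Vv ρ hQ) :
    dd ρ hQ (c - a) (c - b) = - dd ρ hQ a b := by
  rw [dd, dd, cnt_refl ρ hQ hc ha hb, cnt_refl ρ hQ hc hb ha,
    Ico_Ioc_ncard ρ hQ ha hb, Ico_Ioc_ncard ρ hQ hb ha]
  rw [cnt, cnt]
  ring

/-! ### The semiconjugacy π -/

def piZ (n : ℤ) : ℤ := dd ρ hQ (Ff ρ hQ 0) (Ff ρ hQ n)

lemma Ff_mem_Vv (n : ℤ) : Ff ρ hQ n ∈ Vv ρ hQ := ⟨n, rfl⟩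

lemma piZ_diff (m n : ℤ) : piZ ρ hQ m - piZ ρ hQ n = dd ρ hQ (Ff ρ hQ n) (Ff ρ hQ m) := by
  have := dd_cocycle ρ hQ (Ff ρ hQ 0) (Ff ρ hQ n) (Ff ρ hQ m)
  rw [piZ, piZ]
  omega

lemma piZ_equiv (h : G) : ∃ cc : ℤ, ∀ n : ℤ, piZ ρ hQ ((ρ h) n) = eps ρ hQ h * piZ ρ hQ n + cc := by
  rcases eps_pm ρ hQ h with he | he
  · refine ⟨dd ρ hQ (Ff ρ hQ 0) (Ff ρ hQ 0 + Tfun ρ hQ h), ?_⟩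
    intro n
    have hF : Ff ρ hQ ((ρ h) n) = Ff ρ hQ n + Tfun ρ hQ h := by
      rw [Ff_equiv ρ hQ h n, he]; push_cast; ring
    rw [piZ, hF, he, one_mul,
      dd_cocycle ρ hQ (Ff ρ hQ 0) (Ff ρ hQ 0 + Tfun ρ hQ h) (Ff ρ hQ n + Tfun ρ hQ h),
      dd_trans ρ hQ (Vv_trans ρ hQ h he)]
    rw [piZ]
    ring
  · refine ⟨dd ρ hQ (Ff ρ hQ 0) (Tfun ρ hQ h - Ff ρ hQ 0), ?_⟩
    intro n
    have hF : Ff ρ hQ ((ρ h) n) = Tfun ρ hQ h - Ff ρ hQ n := by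
      rw [Ff_equiv ρ hQ h n, he]; push_cast; ring
    rw [piZ, hF, he,
      dd_cocycle ρ hQ (Ff ρ hQ 0) (Tfun ρ hQ h - Ff ρ hQ 0) (Tfun ρ hQ h - Ff ρ hQ n),
      dd_refl ρ hQ (Vv_refl ρ hQ h he) (Ff_mem_Vv ρ hQ 0) (Ff_mem_Vv ρ hQ n)]
    rw [piZ]
    ring

lemma cnt_pos_of_mem {a b : ℝ} (hb : b ∈ Vv ρ hQ) (hab : a < b) : 1 ≤ cnt ρ hQ a b := by
  rw [cnt]
  have : b ∈ Vv ρ hQ ∩ Set.Ioc a b := ⟨hb, hab, le_refl _⟩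
  have hpos : 0 < (Vv ρ hQ ∩ Set.Ioc a b).ncard :=
    (Set.ncard_pos (Vv_locfin ρ hQ a b)).mpr ⟨b, this⟩
  omega

lemma piZ_fiber {m n : ℤ} (h : piZ ρ hQ m = piZ ρ hQ n) : Ff ρ hQ m = Ff ρ hQ n := by
  have hd : dd ρ hQ (Ff ρ hQ n) (Ff ρ hQ m) = 0 := by
    have := piZ_diff ρ hQ m n
    omega
  rcases lt_trichotomy (Ff ρ hQ m) (Ff ρ hQ n) with hlt | heq | hgt
  · exfalso
    have h1 := cnt_pos_of_mem ρ hQ (Ff_mem_Vv ρ hQ n) hlt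
    have h2 := cnt_zero ρ hQ (le_of_lt hlt)
    rw [dd] at hd
    omega
  · exact heq
  · exfalso
    have h1 := cnt_pos_of_mem ρ hQ (Ff_mem_Vv ρ hQ m) hgt
    have h2 := cnt_zero ρ hQ (le_of_lt hgt)
    rw [dd] at hd
    omega

lemma piZ_fiber_dist {m n : ℤ} (h : piZ ρ hQ m = piZ ρ hQ n) :
    |(m:ℝ) - n| ≤ 4 * c2R L A := by
  have hF := piZ_fiber ρ hQ h
  have h1 := Ff_close ρ hQ m
  have h2 := Ff_close ρ hQ n
  rw [abs_le] at h1 h2 ⊢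
  constructor <;> [linarith [h1.1, h1.2, h2.1, h2.2]; linarith [h1.1, h1.2, h2.1, h2.2]]

lemma Vv_dense (x : ℝ) : ∃ v ∈ Vv ρ hQ, x < v ∧ v ≤ x + ww L A := by
  refine ⟨Ff ρ hQ (⌈x⌉ + 2 * C2 L A + 1), Ff_mem_Vv ρ hQ _, ?_, ?_⟩
  · have hcl := Ff_close ρ hQ (⌈x⌉ + 2 * C2 L A + 1)
    rw [abs_le] at hcl
    have hce := Int.le_ceil x
    have : ((⌈x⌉ + 2 * C2 L A + 1 : ℤ) : ℝ) = (⌈x⌉:ℝ) + 2 * c2R L A + 1 := by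
      rw [c2R]; push_cast; ring
    nlinarith [hcl.1, hcl.2]
  · have hcl := Ff_close ρ hQ (⌈x⌉ + 2 * C2 L A + 1)
    rw [abs_le] at hcl
    have hce := Int.ceil_lt_add_one x
    have : ((⌈x⌉ + 2 * C2 L A + 1 : ℤ) : ℝ) = (⌈x⌉:ℝ) + 2 * c2R L A + 1 := by
      rw [c2R]; push_cast; ring
    rw [ww]
    nlinarith [hcl.1, hcl.2]


lemma cnt_mono_right {a b b' : ℝ} (h : b' ≤ b) : cnt ρ hQ a b' ≤ cnt ρ hQ a b := by
  rw [cnt, cnt]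
  have := Set.ncard_le_ncard
    (Set.inter_subset_inter_right (Vv ρ hQ) (Set.Ioc_subset_Ioc_right h)) (Vv_locfin ρ hQ a b)
  omega

lemma cnt_lb (a : ℝ) (j : ℕ) : (j:ℤ) ≤ cnt ρ hQ a (a + j * ww L A) := by
  induction j with
  | zero => simpa using cnt_nonneg ρ hQ a a
  | succ j ih =>
    have hset : a + ((j+1:ℕ):ℝ) * ww L A = a + ((j:ℝ)+1) * ww L A := by push_cast; ring
    rw [hset]
    obtain ⟨v, hvV, hv1, hv2⟩ := Vv_dense ρ hQ (a + j * ww L A)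
    have hw := ww_pos ρ hQ
    have hins : insert v (Vv ρ hQ ∩ Set.Ioc a (a + j * ww L A))
        ⊆ Vv ρ hQ ∩ Set.Ioc a (a + ((j:ℝ)+1) * ww L A) := by
      intro x hx
      rcases Set.mem_insert_iff.mp hx with rfl | hx'
      · refine ⟨hvV, ?_, ?_⟩
        · have : (0:ℝ) ≤ j * ww L A := by positivity
          linarith
        · nlinarith
      · refine ⟨hx'.1, hx'.2.1, ?_⟩
        have h2 := hx'.2.2
        nlinarith
    have hnm : v ∉ Vv ρ hQ ∩ Set.Ioc a (a + j * ww L A) := by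
      rintro ⟨-, -, hle⟩
      linarith
    have hfin : (Vv ρ hQ ∩ Set.Ioc a (a + ((j:ℝ)+1) * ww L A)).Finite := Vv_locfin ρ hQ _ _
    have hcard := Set.ncard_le_ncard hins hfin
    rw [Set.ncard_insert_of_notMem hnm ((Vv_locfin ρ hQ _ _))] at hcard
    rw [cnt] at ih ⊢
    push_cast
    push_cast at ih
    omega

lemma piZ_zero : piZ ρ hQ 0 = 0 := dd_self ρ hQ _

lemma piZ_step_up (n : ℤ) : ∃ n' : ℤ, piZ ρ hQ n' = piZ ρ hQ n + 1 := by
  obtain ⟨v, hvV, hv1, hv2⟩ := Vv_dense ρ hQ (Ff ρ hQ n)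
  have hW : (Vv ρ hQ ∩ Set.Ioc (Ff ρ hQ n) (Ff ρ hQ n + ww L A)).Finite := Vv_locfin ρ hQ _ _
  have hWne : (Vv ρ hQ ∩ Set.Ioc (Ff ρ hQ n) (Ff ρ hQ n + ww L A)).Nonempty :=
    ⟨v, hvV, hv1, hv2⟩
  obtain ⟨v0, hv0, hv0min⟩ := Set.exists_min_image _ id hW hWne
  obtain ⟨n', hn'⟩ := hv0.1
  refine ⟨n', ?_⟩
  have hsingle : Vv ρ hQ ∩ Set.Ioc (Ff ρ hQ n) v0 = {v0} := by
    apply Set.eq_singleton_iff_unique_mem.mpr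
    refine ⟨⟨hv0.1, hv0.2.1, le_refl _⟩, ?_⟩
    rintro u ⟨huV, hu1, hu2⟩
    have hu3 : u ∈ Vv ρ hQ ∩ Set.Ioc (Ff ρ hQ n) (Ff ρ hQ n + ww L A) :=
      ⟨huV, hu1, le_trans hu2 hv0.2.2⟩
    have := hv0min u hu3
    simp only [id] at this
    linarith
  have hdd : dd ρ hQ (Ff ρ hQ n) v0 = 1 := by
    rw [dd, cnt_zero ρ hQ (le_of_lt hv0.2.1), cnt, hsingle, Set.ncard_singleton]
    simp
  have hco := dd_cocycle ρ hQ (Ff ρ hQ 0) (Ff ρ hQ n) v0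
  have h1 : piZ ρ hQ n' = dd ρ hQ (Ff ρ hQ 0) (Ff ρ hQ n) + dd ρ hQ (Ff ρ hQ n) v0 := by
    rw [piZ, hn']
    exact hco
  rw [h1, hdd, piZ]

lemma piZ_step_dn (n : ℤ) : ∃ n' : ℤ, piZ ρ hQ n' = piZ ρ hQ n - 1 := by
  have hw := ww_pos ρ hQ
  obtain ⟨v, hvV, hv1, hv2⟩ := Vv_dense ρ hQ (Ff ρ hQ n - 2 * ww L A)
  have hvlt : v < Ff ρ hQ n := by linarith
  have hW : (Vv ρ hQ ∩ Set.Ico (Ff ρ hQ n - 2 * ww L A) (Ff ρ hQ n)).Finite :=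
    (Vv_locfin ρ hQ (Ff ρ hQ n - 2 * ww L A - 1) (Ff ρ hQ n)).subset
      (Set.inter_subset_inter_right _ (fun x hx => ⟨by linarith [hx.1], le_of_lt hx.2⟩))
  have hWne : (Vv ρ hQ ∩ Set.Ico (Ff ρ hQ n - 2 * ww L A) (Ff ρ hQ n)).Nonempty :=
    ⟨v, hvV, le_of_lt hv1, hvlt⟩
  obtain ⟨v0, hv0, hv0max⟩ := Set.exists_max_image _ id hW hWne
  obtain ⟨n', hn'⟩ := hv0.1
  refine ⟨n', ?_⟩
  have hsingle : Vv ρ hQ ∩ Set.Ioc v0 (Ff ρ hQ n) = {Ff ρ hQ n} := by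
    apply Set.eq_singleton_iff_unique_mem.mpr
    refine ⟨⟨Ff_mem_Vv ρ hQ n, hv0.2.2, le_refl _⟩, ?_⟩
    rintro u ⟨huV, hu1, hu2⟩
    rcases eq_or_lt_of_le hu2 with h|h
    · exact h
    · exfalso
      have hu3 : u ∈ Vv ρ hQ ∩ Set.Ico (Ff ρ hQ n - 2 * ww L A) (Ff ρ hQ n) :=
        ⟨huV, by linarith [hv0.2.1], h⟩
      have := hv0max u hu3
      simp only [id] at this
      linarith
  have hdd : dd ρ hQ v0 (Ff ρ hQ n) = 1 := by
    rw [dd, cnt_zero ρ hQ (le_of_lt hv0.2.2), cnt, hsingle, Set.ncard_singleton]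
    simp
  have hco := dd_cocycle ρ hQ (Ff ρ hQ 0) v0 (Ff ρ hQ n)
  have h1 : piZ ρ hQ n = piZ ρ hQ n' + 1 := by
    rw [piZ, hco, hdd, piZ, hn']
  omega

lemma piZ_surj (k : ℤ) : ∃ n : ℤ, piZ ρ hQ n = k := by
  induction k using Int.induction_on with
  | zero => exact ⟨0, piZ_zero ρ hQ⟩
  | succ i ih =>
    obtain ⟨n, hn⟩ := ih
    obtain ⟨n', hn'⟩ := piZ_step_up ρ hQ n
    exact ⟨n', by rw [hn', hn]⟩
  | pred i ih =>
    obtain ⟨n, hn⟩ := ih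
    obtain ⟨n', hn'⟩ := piZ_step_dn ρ hQ n
    exact ⟨n', by rw [hn', hn]; try ring⟩


lemma cnt_ub {a b : ℝ} (hab : a ≤ b) : ((cnt ρ hQ a b : ℤ) : ℝ) ≤ b - a + 4 * c2R L A + 1 := by
  have hc2 := c2R_ge ρ hQ
  have hsub : Vv ρ hQ ∩ Set.Ioc a b
      ⊆ (fun k : ℤ => Ff ρ hQ k) '' (Set.Icc (⌈a - 2*c2R L A⌉) (⌊b + 2*c2R L A⌋) : Set ℤ) := by
    rintro x ⟨⟨k, rfl⟩, hx⟩
    refine ⟨k, ?_, rfl⟩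
    rw [Set.mem_Icc]
    have hcl := Ff_close ρ hQ k
    rw [abs_le] at hcl
    rw [Set.mem_Ioc] at hx
    constructor
    · rw [Int.ceil_le]; push_cast; linarith [hx.1]
    · rw [Int.le_floor]; push_cast; linarith [hx.2]
  have hfinI : (Set.Icc (⌈a - 2*c2R L A⌉) (⌊b + 2*c2R L A⌋) : Set ℤ).Finite := Set.finite_Icc _ _
  have h1 := Set.ncard_le_ncard hsub (hfinI.image _)
  have h2 := Set.ncard_image_le (s := (Set.Icc (⌈a - 2*c2R L A⌉) (⌊b + 2*c2R L A⌋) : Set ℤ))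
    (f := fun k : ℤ => Ff ρ hQ k) hfinI
  have h3 : (Set.Icc (⌈a - 2*c2R L A⌉) (⌊b + 2*c2R L A⌋) : Set ℤ).ncard
      = (⌊b + 2*c2R L A⌋ + 1 - ⌈a - 2*c2R L A⌉).toNat := by
    rw [← Finset.coe_Icc, Set.ncard_coe_finset, Int.card_Icc]
  have h4 : ((⌊b + 2*c2R L A⌋ + 1 - ⌈a - 2*c2R L A⌉).toNat : ℤ)
      ≤ max (⌊b + 2*c2R L A⌋ + 1 - ⌈a - 2*c2R L A⌉) 0 := by omega
  have h5 : ((⌊b + 2*c2R L A⌋ + 1 - ⌈a - 2*c2R L A⌉ : ℤ) : ℝ) ≤ b - a + 4 * c2R L A + 1 := by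
    have hf := Int.floor_le (b + 2*c2R L A)
    have hce := Int.le_ceil (a - 2*c2R L A)
    push_cast
    linarith
  have h6 : ((0:ℤ):ℝ) ≤ b - a + 4 * c2R L A + 1 := by push_cast; linarith
  have h7 : ((max (⌊b + 2*c2R L A⌋ + 1 - ⌈a - 2*c2R L A⌉) 0 : ℤ) : ℝ) ≤ b - a + 4 * c2R L A + 1 := by
    rcases max_cases (⌊b + 2*c2R L A⌋ + 1 - ⌈a - 2*c2R L A⌉) (0:ℤ) with ⟨hm, -⟩ | ⟨hm, -⟩ <;>
      rw [hm]
    · exact h5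
    · exact h6
  rw [cnt]
  have hcnt : ((Vv ρ hQ ∩ Set.Ioc a b).ncard : ℤ) ≤ ((⌊b + 2*c2R L A⌋ + 1 - ⌈a - 2*c2R L A⌉).toNat : ℤ) := by
    rw [← h3]
    exact_mod_cast le_trans h1 h2
  calc (((Vv ρ hQ ∩ Set.Ioc a b).ncard : ℤ) : ℝ)
      ≤ ((max (⌊b + 2*c2R L A⌋ + 1 - ⌈a - 2*c2R L A⌉) 0 : ℤ) : ℝ) := by
        exact_mod_cast le_trans hcnt h4
    _ ≤ _ := h7

lemma Ff_dist (m n : ℤ) : |Ff ρ hQ m - Ff ρ hQ n| ≤ |(m:ℝ) - n| + 4 * c2R L A := by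
  have h1 := Ff_close ρ hQ m
  have h2 := Ff_close ρ hQ n
  rw [abs_le] at h1 h2 ⊢
  rcases abs_cases ((m:ℝ) - n) with ⟨he, -⟩ | ⟨he, -⟩ <;> rw [he] <;>
    constructor <;> linarith [h1.1, h1.2, h2.1, h2.2, le_abs_self ((m:ℝ) - n),
      neg_abs_le ((m:ℝ) - n)]

lemma piZ_upper (m n : ℤ) :
    |(piZ ρ hQ m : ℝ) - piZ ρ hQ n| ≤ |(m:ℝ) - n| + 8 * c2R L A + 1 := by
  have hd := piZ_diff ρ hQ m n
  have hFd := Ff_dist ρ hQ m n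
  rcases le_total (Ff ρ hQ n) (Ff ρ hQ m) with hle | hle
  · have hz := cnt_zero ρ hQ hle
    have hnn := cnt_nonneg ρ hQ (Ff ρ hQ n) (Ff ρ hQ m)
    have hub := cnt_ub ρ hQ hle
    have habs : |Ff ρ hQ m - Ff ρ hQ n| = Ff ρ hQ m - Ff ρ hQ n := abs_of_nonneg (by linarith)
    have heq : piZ ρ hQ m - piZ ρ hQ n = cnt ρ hQ (Ff ρ hQ n) (Ff ρ hQ m) := by
      rw [hd, dd, hz]; ring
    have : |(piZ ρ hQ m : ℝ) - piZ ρ hQ n| = ((cnt ρ hQ (Ff ρ hQ n) (Ff ρ hQ m) : ℤ) : ℝ) := by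
      rw [show (piZ ρ hQ m : ℝ) - piZ ρ hQ n = ((piZ ρ hQ m - piZ ρ hQ n : ℤ) : ℝ) by push_cast; ring,
        heq, abs_of_nonneg (by exact_mod_cast hnn)]
    rw [this]
    calc ((cnt ρ hQ (Ff ρ hQ n) (Ff ρ hQ m) : ℤ) : ℝ)
        ≤ Ff ρ hQ m - Ff ρ hQ n + 4 * c2R L A + 1 := hub
      _ ≤ |(m:ℝ) - n| + 8 * c2R L A + 1 := by rw [← habs] at *; linarith
  · have hz := cnt_zero ρ hQ hle
    have hnn := cnt_nonneg ρ hQ (Ff ρ hQ m) (Ff ρ hQ n)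
    have hub := cnt_ub ρ hQ hle
    have habs : |Ff ρ hQ m - Ff ρ hQ n| = Ff ρ hQ n - Ff ρ hQ m := by
      rw [abs_sub_comm]; exact abs_of_nonneg (by linarith)
    have heq : piZ ρ hQ n - piZ ρ hQ m = cnt ρ hQ (Ff ρ hQ m) (Ff ρ hQ n) := by
      have hd2 := piZ_diff ρ hQ n m
      rw [hd2, dd, hz]; ring
    have : |(piZ ρ hQ m : ℝ) - piZ ρ hQ n| = ((cnt ρ hQ (Ff ρ hQ m) (Ff ρ hQ n) : ℤ) : ℝ) := by
      rw [abs_sub_comm,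
        show (piZ ρ hQ n : ℝ) - piZ ρ hQ m = ((piZ ρ hQ n - piZ ρ hQ m : ℤ) : ℝ) by push_cast; ring,
        heq, abs_of_nonneg (by exact_mod_cast hnn)]
    rw [this]
    calc ((cnt ρ hQ (Ff ρ hQ m) (Ff ρ hQ n) : ℤ) : ℝ)
        ≤ Ff ρ hQ n - Ff ρ hQ m + 4 * c2R L A + 1 := hub
      _ ≤ |(m:ℝ) - n| + 8 * c2R L A + 1 := by rw [← habs] at *; linarith

lemma piZ_lower_aux {m n : ℤ} (hlt : Ff ρ hQ n < Ff ρ hQ m) :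
    (|(m:ℝ) - n| - 4 * c2R L A) / ww L A - 1 ≤ ((piZ ρ hQ m - piZ ρ hQ n : ℤ) : ℝ) := by
  have hw := ww_pos ρ hQ
  set a := Ff ρ hQ n
  set b := Ff ρ hQ m
  set j : ℕ := ⌊(b - a)/ww L A⌋₊ with hj
  have hj1 : (j:ℝ) ≤ (b - a)/ww L A :=
    Nat.floor_le (div_nonneg (by linarith) (le_of_lt hw))
  have hj2 : (b - a)/ww L A < (j:ℝ) + 1 := Nat.lt_floor_add_one _
  have hjw : a + (j:ℝ) * ww L A ≤ b := by
    have := (le_div_iff₀ hw).mp hj1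
    linarith
  have h1 := cnt_lb ρ hQ a j
  have h2 := cnt_mono_right ρ hQ (a := a) hjw
  have heq : piZ ρ hQ m - piZ ρ hQ n = cnt ρ hQ a b := by
    have hd := piZ_diff ρ hQ m n
    rw [hd, dd, cnt_zero ρ hQ (le_of_lt hlt)]; ring
  have h3 : (j:ℝ) ≤ ((piZ ρ hQ m - piZ ρ hQ n : ℤ) : ℝ) := by
    rw [heq]
    exact_mod_cast le_trans h1 h2
  have hFd : |(m:ℝ) - n| - 4 * c2R L A ≤ b - a := by
    have h4 := Ff_dist ρ hQ m n
    have h5 : |b - a| = b - a := abs_of_nonneg (by linarith)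
    have h6 : |Ff ρ hQ m - Ff ρ hQ n| = b - a := h5
    have h7 := abs_sub_abs_le_abs_sub ((m:ℝ) - n) (Ff ρ hQ m - Ff ρ hQ n)
    -- |m - n| ≤ |Fm - Fn| + |(m-n) - (Fm - Fn)|
    have h8 : |(m:ℝ) - n| ≤ |Ff ρ hQ m - Ff ρ hQ n| + 4 * c2R L A := by
      have h9 := Ff_close ρ hQ m
      have h10 := Ff_close ρ hQ n
      rw [abs_le] at h9 h10
      rcases abs_cases ((m:ℝ) - n) with ⟨he, -⟩ | ⟨he, -⟩ <;> rw [he] <;>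
        rcases abs_cases (Ff ρ hQ m - Ff ρ hQ n) with ⟨he2, -⟩ | ⟨he2, -⟩ <;> rw [he2] <;>
          linarith [h9.1, h9.2, h10.1, h10.2]
    rw [h6] at h8
    linarith
  have hdiv : (|(m:ℝ) - n| - 4 * c2R L A) / ww L A ≤ (b - a) / ww L A :=
    (div_le_div_iff_of_pos_right hw).mpr hFd
  linarith


/-! ### Fibers, branching datum, tips -/

lemma piZ_fiber_distZ {m n : ℤ} (h : piZ ρ hQ m = piZ ρ hQ n) :
    |m - n| ≤ 4 * C2 L A := by
  have hr := piZ_fiber_dist ρ hQ h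
  rw [c2R] at hr
  have h2 : ((|m - n| : ℤ) : ℝ) ≤ ((4 * C2 L A : ℤ) : ℝ) := by
    rw [Int.cast_abs]
    push_cast at hr ⊢
    linarith [hr]
  exact_mod_cast h2

def pt (x : ℤ) : ℤ := (piZ_surj ρ hQ x).choose

lemma pt_spec (x : ℤ) : piZ ρ hQ (pt ρ hQ x) = x := (piZ_surj ρ hQ x).choose_spec

def fibF (x : ℤ) : Finset ℤ :=
  (Finset.Icc (pt ρ hQ x - 4 * C2 L A) (pt ρ hQ x + 4 * C2 L A)).filter
    (fun n => piZ ρ hQ n = x)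

lemma mem_fibF {x n : ℤ} : n ∈ fibF ρ hQ x ↔ piZ ρ hQ n = x := by
  rw [fibF, Finset.mem_filter, Finset.mem_Icc]
  constructor
  · exact fun h => h.2
  · intro h
    refine ⟨?_, h⟩
    have := piZ_fiber_distZ ρ hQ (by rw [h, pt_spec] : piZ ρ hQ n = piZ ρ hQ (pt ρ hQ x))
    rw [abs_le] at this
    omega

lemma fibF_card_le (x : ℤ) : ((fibF ρ hQ x).card : ℤ) ≤ 8 * C2 L A + 1 := by
  have h1 := Finset.card_filter_le
    (Finset.Icc (pt ρ hQ x - 4 * C2 L A) (pt ρ hQ x + 4 * C2 L A))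
    (fun n => piZ ρ hQ n = x)
  have h2 : (Finset.Icc (pt ρ hQ x - 4 * C2 L A) (pt ρ hQ x + 4 * C2 L A)).card
      = (8 * C2 L A + 1).toNat := by
    rw [Int.card_Icc]
    congr 1
    omega
  rw [fibF]
  have hC := C2_ge ρ hQ
  omega

lemma fibF_self (n : ℤ) : n ∈ fibF ρ hQ (piZ ρ hQ n) := mem_fibF ρ hQ |>.mpr rfl

def bb (x : ℤ) : ℕ := if 2 ≤ (fibF ρ hQ x).card then (fibF ρ hQ x).card else 0

def rk (n : ℤ) : ℕ := ((fibF ρ hQ (piZ ρ hQ n)).filter (fun m => m < n)).card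

lemma rk_lt (n : ℤ) (h2 : 2 ≤ (fibF ρ hQ (piZ ρ hQ n)).card) :
    rk ρ hQ n < bb ρ hQ (piZ ρ hQ n) := by
  rw [bb, if_pos h2, rk]
  apply Finset.card_lt_card
  constructor
  · exact Finset.filter_subset _ _
  · intro hsub
    have h3 := hsub (fibF_self ρ hQ n)
    rw [Finset.mem_filter] at h3
    exact absurd h3.2 (lt_irrefl n)

lemma rk_inj {m n : ℤ} (hpi : piZ ρ hQ m = piZ ρ hQ n) (hr : rk ρ hQ m = rk ρ hQ n) :
    m = n := by
  rcases lt_trichotomy m n with hlt | heq | hgt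
  · exfalso
    have hsub : (fibF ρ hQ (piZ ρ hQ m)).filter (fun k => k < m)
        ⊂ (fibF ρ hQ (piZ ρ hQ n)).filter (fun k => k < n) := by
      rw [hpi]
      constructor
      · intro k hk
        rw [Finset.mem_filter] at hk ⊢
        exact ⟨hk.1, lt_trans hk.2 hlt⟩
      · intro hsub2
        have hm : m ∈ (fibF ρ hQ (piZ ρ hQ n)).filter (fun k => k < n) := by
          rw [Finset.mem_filter]
          exact ⟨by rw [← hpi]; exact fibF_self ρ hQ m, hlt⟩
        have := hsub2 hm
        rw [Finset.mem_filter] at this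
        exact absurd this.2 (lt_irrefl m)
    have := Finset.card_lt_card hsub
    rw [rk, rk] at hr
    omega
  · exact heq
  · exfalso
    have hsub : (fibF ρ hQ (piZ ρ hQ n)).filter (fun k => k < n)
        ⊂ (fibF ρ hQ (piZ ρ hQ m)).filter (fun k => k < m) := by
      rw [hpi]
      constructor
      · intro k hk
        rw [Finset.mem_filter] at hk ⊢
        exact ⟨hk.1, lt_trans hk.2 hgt⟩
      · intro hsub2
        have hm : n ∈ (fibF ρ hQ (piZ ρ hQ n)).filter (fun k => k < m) := by
          rw [Finset.mem_filter]
          exact ⟨fibF_self ρ hQ n, hgt⟩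
        have := hsub2 hm
        rw [Finset.mem_filter] at this
        exact absurd this.2 (lt_irrefl n)
    have := Finset.card_lt_card hsub
    rw [rk, rk] at hr
    omega

open Classical in
noncomputable def qq (n : ℤ) : BL (bb ρ hQ) :=
  if h : 2 ≤ (fibF ρ hQ (piZ ρ hQ n)).card then
    Sum.inr ⟨piZ ρ hQ n, ⟨rk ρ hQ n, rk_lt ρ hQ n h⟩⟩
  else Sum.inl (piZ ρ hQ n)

lemma qq_form_inr (n : ℤ) (h2 : 2 ≤ (fibF ρ hQ (piZ ρ hQ n)).card) :
    qq ρ hQ n = Sum.inr ⟨piZ ρ hQ n, ⟨rk ρ hQ n, rk_lt ρ hQ n h2⟩⟩ := by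
  unfold qq; exact dif_pos h2

lemma qq_form_inl (n : ℤ) (h2 : ¬ 2 ≤ (fibF ρ hQ (piZ ρ hQ n)).card) :
    qq ρ hQ n = Sum.inl (piZ ρ hQ n) := by
  unfold qq; exact dif_neg h2

lemma qq_eq_inl {n x : ℤ} (h : qq ρ hQ n = Sum.inl x) :
    piZ ρ hQ n = x ∧ (fibF ρ hQ x).card ≤ 1 := by
  by_cases h2 : 2 ≤ (fibF ρ hQ (piZ ρ hQ n)).card
  · rw [qq_form_inr ρ hQ n h2] at h
    exact absurd h (by simp)
  · rw [qq_form_inl ρ hQ n h2] at h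
    have hx : piZ ρ hQ n = x := Sum.inl.inj h
    rw [← hx]
    exact ⟨rfl, by omega⟩

lemma qq_eq_inr {n x : ℤ} {j : Fin (bb ρ hQ x)} (h : qq ρ hQ n = Sum.inr ⟨x, j⟩) :
    piZ ρ hQ n = x ∧ 2 ≤ (fibF ρ hQ x).card ∧ rk ρ hQ n = (j : ℕ) := by
  by_cases h2 : 2 ≤ (fibF ρ hQ (piZ ρ hQ n)).card
  · rw [qq_form_inr ρ hQ n h2] at h
    have h3 := Sum.inr.inj h
    have hx : piZ ρ hQ n = x := congrArg Sigma.fst h3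
    subst hx
    have hj := Sigma.mk.inj_iff.mp h3
    have hj2 : (⟨rk ρ hQ n, rk_lt ρ hQ n h2⟩ : Fin (bb ρ hQ (piZ ρ hQ n))) = j :=
      eq_of_heq hj.2
    exact ⟨rfl, h2, by rw [← hj2]⟩
  · rw [qq_form_inl ρ hQ n h2] at h
    exact absurd h (by simp)

lemma qq_inj : Function.Injective (qq ρ hQ) := by
  intro m n h
  rcases hm : qq ρ hQ m with x | ⟨x, j⟩
  · rw [hm] at h
    have h1 := qq_eq_inl ρ hQ hm
    have h2 := qq_eq_inl ρ hQ h.symm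
    have hpi : piZ ρ hQ m = piZ ρ hQ n := by rw [h1.1, h2.1]
    have hmm : m ∈ fibF ρ hQ x := mem_fibF ρ hQ |>.mpr h1.1
    have hnn : n ∈ fibF ρ hQ x := mem_fibF ρ hQ |>.mpr h2.1
    exact Finset.card_le_one.mp h1.2 m hmm n hnn
  · rw [hm] at h
    have h1 := qq_eq_inr ρ hQ hm
    have h2 := qq_eq_inr ρ hQ h.symm
    exact rk_inj ρ hQ (by rw [h1.1, h2.1]) (by rw [h1.2.2, h2.2.2])

lemma qq_tip (n : ℤ) : blTip (bb ρ hQ) (qq ρ hQ n) := by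
  by_cases h2 : 2 ≤ (fibF ρ hQ (piZ ρ hQ n)).card
  · rw [qq_form_inr ρ hQ n h2]
    trivial
  · rw [qq_form_inl ρ hQ n h2]
    show bb ρ hQ (piZ ρ hQ n) = 0
    rw [bb, if_neg h2]

lemma bb_pos_two {x : ℤ} (h : 0 < bb ρ hQ x) : 2 ≤ (fibF ρ hQ x).card := by
  by_contra h2
  rw [bb, if_neg h2] at h
  exact absurd h (lt_irrefl 0)

lemma tip_exists : ∀ v : BL (bb ρ hQ), blTip (bb ρ hQ) v → ∃ n, qq ρ hQ n = v := by
  intro v hv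
  rcases v with x | ⟨x, j⟩
  · have hx : bb ρ hQ x = 0 := hv
    refine ⟨pt ρ hQ x, ?_⟩
    have h2 : ¬ 2 ≤ (fibF ρ hQ (piZ ρ hQ (pt ρ hQ x))).card := by
      rw [pt_spec]
      intro hc
      rw [bb, if_pos hc] at hx
      omega
    rw [qq_form_inl ρ hQ (pt ρ hQ x) h2, pt_spec]
  · have hb : 0 < bb ρ hQ x := lt_of_le_of_lt (Nat.zero_le _) j.2
    have h2 := bb_pos_two ρ hQ hb
    have hbcard : bb ρ hQ x = (fibF ρ hQ x).card := by rw [bb, if_pos h2]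
    -- the rank map on the fiber is bijective onto Fin (card)
    let Φ : {m // m ∈ fibF ρ hQ x} → Fin (fibF ρ hQ x).card := fun m =>
      ⟨rk ρ hQ m.1, by
        have hpim : piZ ρ hQ m.1 = x := (mem_fibF ρ hQ).mp m.2
        have := rk_lt ρ hQ m.1 (by rw [hpim]; exact h2)
        rw [bb, hpim, if_pos h2] at this
        exact this⟩
    have hΦinj : Function.Injective Φ := by
      intro a b hab
      have h3 : rk ρ hQ a.1 = rk ρ hQ b.1 := congrArg Fin.val hab
      have hpa : piZ ρ hQ a.1 = x := (mem_fibF ρ hQ).mp a.2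
      have hpb : piZ ρ hQ b.1 = x := (mem_fibF ρ hQ).mp b.2
      exact Subtype.ext (rk_inj ρ hQ (by rw [hpa, hpb]) h3)
    have hΦbij : Function.Bijective Φ := by
      rw [Fintype.bijective_iff_injective_and_card]
      exact ⟨hΦinj, by simp [Fintype.card_coe]⟩
    obtain ⟨⟨n, hn⟩, hΦn⟩ := hΦbij.2 ⟨(j : ℕ), by rw [← hbcard]; exact j.2⟩
    refine ⟨n, ?_⟩
    have hpin : piZ ρ hQ n = x := (mem_fibF ρ hQ).mp hn
    have hrkn : rk ρ hQ n = (j : ℕ) := congrArg Fin.val hΦn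
    subst hpin
    rw [qq_form_inr ρ hQ n (by exact h2)]
    congr 1
    ext
    · rfl
    · simp [hrkn]


/-! ### The induced isometric action -/

def ccg (h : G) : ℤ := (piZ_equiv ρ hQ h).choose

lemma ccg_spec (h : G) (n : ℤ) :
    piZ ρ hQ ((ρ h) n) = eps ρ hQ h * piZ ρ hQ n + ccg ρ hQ h :=
  (piZ_equiv ρ hQ h).choose_spec n

def iot (h : G) (x : ℤ) : ℤ := eps ρ hQ h * x + ccg ρ hQ h

lemma piZ_rho (h : G) (n : ℤ) : piZ ρ hQ ((ρ h) n) = iot ρ hQ h (piZ ρ hQ n) :=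
  ccg_spec ρ hQ h n

omit hQ in
lemma rho_one_apply (n : ℤ) : (ρ (1 : G)) n = n := by
  rw [map_one]; rfl

lemma iot_one (x : ℤ) : iot ρ hQ (1 : G) x = x := by
  have h1 := ccg_spec ρ hQ (1 : G) 0
  rw [rho_one_apply ρ 0, eps_one, piZ_zero] at h1
  rw [iot, eps_one]
  omega

lemma iot_mul (g h : G) (x : ℤ) :
    iot ρ hQ (g * h) x = iot ρ hQ g (iot ρ hQ h x) := by
  obtain ⟨n, hn⟩ := piZ_surj ρ hQ x
  have e1 := ccg_spec ρ hQ (g * h) n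
  have e2 := ccg_spec ρ hQ g ((ρ h) n)
  have e3 := ccg_spec ρ hQ h n
  rw [rho_mul_apply ρ g h n, e2, e3, eps_mul ρ hQ g h] at e1
  rw [iot, iot, iot, eps_mul ρ hQ g h, ← hn]
  rcases eps_pm ρ hQ g with h1|h1 <;> rcases eps_pm ρ hQ h with h2|h2 <;>
    rw [h1, h2] at e1 ⊢ <;> omega

lemma iot_injective (h : G) : Function.Injective (iot ρ hQ h) := by
  intro x y hxy
  rw [iot, iot] at hxy
  rcases eps_pm ρ hQ h with h1|h1 <;> rw [h1] at hxy <;> omega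

lemma iot_distR (g : G) (a b : ℤ) :
    |((iot ρ hQ g a : ℤ) : ℝ) - ((iot ρ hQ g b : ℤ) : ℝ)| = |(a : ℝ) - b| := by
  rw [iot, iot]
  rcases eps_pm ρ hQ g with h1|h1 <;> rw [h1] <;> push_cast
  · rw [show (1:ℝ) * a + (ccg ρ hQ g : ℝ) - ((1:ℝ) * b + ccg ρ hQ g) = (a:ℝ) - b by ring]
  · rw [show (-1:ℝ) * a + (ccg ρ hQ g : ℝ) - ((-1:ℝ) * b + ccg ρ hQ g) = -((a:ℝ) - b) by ring,
      abs_neg]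

lemma fibF_iot (h : G) (x : ℤ) :
    fibF ρ hQ (iot ρ hQ h x) = (fibF ρ hQ x).image (⇑(ρ h)) := by
  ext n
  rw [mem_fibF, Finset.mem_image]
  constructor
  · intro hn
    refine ⟨(ρ h⁻¹) n, ?_, ?_⟩
    · rw [mem_fibF]
      have h1 : (ρ h) ((ρ h⁻¹) n) = n := by
        rw [← rho_mul_apply, mul_inv_cancel, rho_one_apply]
      have h2 := piZ_rho ρ hQ h ((ρ h⁻¹) n)
      rw [h1, hn] at h2
      exact iot_injective ρ hQ h h2.symm
    · rw [← rho_mul_apply, mul_inv_cancel, rho_one_apply]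
  · rintro ⟨m, hm, rfl⟩
    rw [mem_fibF] at hm
    rw [piZ_rho, hm]

lemma fibF_card_iot (h : G) (x : ℤ) :
    (fibF ρ hQ (iot ρ hQ h x)).card = (fibF ρ hQ x).card := by
  rw [fibF_iot, Finset.card_image_of_injective _ (ρ h).injective]

lemma bb_iot (h : G) (x : ℤ) : bb ρ hQ (iot ρ hQ h x) = bb ρ hQ x := by
  rw [bb, bb, fibF_card_iot]

open Classical in
noncomputable def sfun (g : G) : BL (bb ρ hQ) → BL (bb ρ hQ) := fun v =>
  if hv : ∃ n, qq ρ hQ n = v then qq ρ hQ ((ρ g) hv.choose)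
  else
    match v with
    | .inl x => Sum.inl (iot ρ hQ g x)
    | .inr _ => Sum.inl 0

lemma sfun_q (g : G) (n : ℤ) : sfun ρ hQ g (qq ρ hQ n) = qq ρ hQ ((ρ g) n) := by
  have hv : ∃ m, qq ρ hQ m = qq ρ hQ n := ⟨n, rfl⟩
  rw [sfun, dif_pos hv]
  have := hv.choose_spec
  have h2 : hv.choose = n := qq_inj ρ hQ this
  rw [h2]

lemma sfun_inl (g : G) (x : ℤ) :
    sfun ρ hQ g (Sum.inl x) = Sum.inl (iot ρ hQ g x) := by
  by_cases hv : ∃ n, qq ρ hQ n = Sum.inl x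
  · rw [show sfun ρ hQ g (Sum.inl x) = qq ρ hQ ((ρ g) hv.choose) from dif_pos hv]
    have hc := hv.choose_spec
    have h1 := qq_eq_inl ρ hQ hc
    have hpi : piZ ρ hQ ((ρ g) hv.choose) = iot ρ hQ g x := by
      rw [piZ_rho, h1.1]
    have hcard : ¬ 2 ≤ (fibF ρ hQ (piZ ρ hQ ((ρ g) hv.choose))).card := by
      rw [hpi, fibF_card_iot]
      omega
    rw [qq_form_inl ρ hQ _ hcard, hpi]
  · exact dif_neg hv

lemma sfun_mul (g h : G) (v : BL (bb ρ hQ)) :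
    sfun ρ hQ (g * h) v = sfun ρ hQ g (sfun ρ hQ h v) := by
  rcases v with x | p
  · rw [sfun_inl, sfun_inl, sfun_inl, iot_mul]
  · obtain ⟨n, hn⟩ := tip_exists ρ hQ (Sum.inr p) trivial
    rw [← hn, sfun_q, sfun_q, sfun_q, rho_mul_apply]

lemma sfun_one (v : BL (bb ρ hQ)) : sfun ρ hQ (1 : G) v = v := by
  rcases v with x | p
  · rw [sfun_inl]
    congr 1
    exact iot_one ρ hQ x
  · obtain ⟨n, hn⟩ := tip_exists ρ hQ (Sum.inr p) trivial
    rw [← hn, sfun_q, rho_one_apply]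

noncomputable def sperm (g : G) : Equiv.Perm (BL (bb ρ hQ)) where
  toFun := sfun ρ hQ g
  invFun := sfun ρ hQ g⁻¹
  left_inv := by
    intro v
    rw [← sfun_mul, inv_mul_cancel, sfun_one]
  right_inv := by
    intro v
    rw [← sfun_mul, mul_inv_cancel, sfun_one]

noncomputable def shom : G →* Equiv.Perm (BL (bb ρ hQ)) :=
  MonoidHom.mk' (sperm ρ hQ) (by
    intro g h
    apply Equiv.ext
    intro v
    exact sfun_mul ρ hQ g h v)

lemma shom_apply (g : G) (v : BL (bb ρ hQ)) : (shom ρ hQ g) v = sfun ρ hQ g v := rfl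


lemma sfun_inr (g : G) (p : Σ x : ℤ, Fin (bb ρ hQ x)) :
    ∃ j : Fin (bb ρ hQ (iot ρ hQ g p.1)),
      sfun ρ hQ g (Sum.inr p) = Sum.inr ⟨iot ρ hQ g p.1, j⟩ := by
  rcases p with ⟨x, jx⟩
  obtain ⟨n, hn⟩ := tip_exists ρ hQ (Sum.inr ⟨x, jx⟩) trivial
  have h1 := qq_eq_inr ρ hQ hn
  have hpi : piZ ρ hQ ((ρ g) n) = iot ρ hQ g x := by
    rw [piZ_rho, h1.1]
  have h2 : 2 ≤ (fibF ρ hQ (piZ ρ hQ ((ρ g) n))).card := by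
    rw [hpi, fibF_card_iot]
    exact h1.2.1
  rw [← hn, sfun_q]
  simp only
  rw [← hpi]
  exact ⟨_, qq_form_inr ρ hQ _ h2⟩

lemma sfun_inj (g : G) : Function.Injective (sfun ρ hQ g) := by
  intro u v h
  have h1 : sfun ρ hQ g⁻¹ (sfun ρ hQ g u) = sfun ρ hQ g⁻¹ (sfun ρ hQ g v) := by rw [h]
  rw [← sfun_mul, ← sfun_mul, inv_mul_cancel, sfun_one, sfun_one] at h1
  exact h1

lemma sfun_isom (g : G) (u v : BL (bb ρ hQ)) :
    blDist (bb ρ hQ) (sfun ρ hQ g u) (sfun ρ hQ g v) = blDist (bb ρ hQ) u v := by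
  rcases u with x | p <;> rcases v with y | r
  · by_cases hxy : x = y
    · subst hxy
      exact (blDist_self _ _).trans (blDist_self _ _).symm
    · rw [sfun_inl, sfun_inl, blDist_ll _ hxy,
        blDist_ll _ (fun hc => hxy (iot_injective ρ hQ g hc)), iot_distR]
  · obtain ⟨j', hj'⟩ := sfun_inr ρ hQ g r
    rw [sfun_inl, hj', blDist_lr, blDist_lr]
    simp only
    rw [iot_distR]
  · obtain ⟨j', hj'⟩ := sfun_inr ρ hQ g p
    rw [sfun_inl, hj', blDist_rl, blDist_rl]
    simp only
    rw [iot_distR]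
  · obtain ⟨jp, hjp⟩ := sfun_inr ρ hQ g p
    obtain ⟨jr, hjr⟩ := sfun_inr ρ hQ g r
    by_cases hpr : p = r
    · subst hpr
      exact (blDist_self _ _).trans (blDist_self _ _).symm
    · have hne2 : (Sum.inr ⟨iot ρ hQ g p.1, jp⟩ : BL (bb ρ hQ)) ≠ Sum.inr ⟨iot ρ hQ g r.1, jr⟩ := by
        intro hc
        rw [← hjp, ← hjr] at hc
        exact hpr (Sum.inr.inj (sfun_inj ρ hQ g hc))
      have hne3 : (⟨iot ρ hQ g p.1, jp⟩ : Σ x : ℤ, Fin (bb ρ hQ x)) ≠ ⟨iot ρ hQ g r.1, jr⟩ :=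
        fun hc => hne2 (by rw [hc])
      by_cases h1 : p.1 = r.1
      · rw [hjp, hjr, blDist_rr_same _ hne3 (by simp only; rw [h1]),
          blDist_rr_same _ hpr h1]
      · rw [hjp, hjr,
          blDist_rr_diff _ (fun hc => h1 (iot_injective ρ hQ g hc)),
          blDist_rr_diff _ h1]
        simp only
        rw [iot_distR]

/-! ### Distances between q-points -/

lemma qdist_same {m n : ℤ} (hmn : m ≠ n) (hpi : piZ ρ hQ m = piZ ρ hQ n) :
    blDist (bb ρ hQ) (qq ρ hQ m) (qq ρ hQ n) = 2 := by
  have h2 : 2 ≤ (fibF ρ hQ (piZ ρ hQ m)).card := by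
    rw [Nat.succ_le_iff]
    apply Finset.one_lt_card.mpr
    exact ⟨m, fibF_self ρ hQ m, n, (mem_fibF ρ hQ).mpr hpi.symm, hmn⟩
  have h2' : 2 ≤ (fibF ρ hQ (piZ ρ hQ n)).card := by rwa [← hpi]
  have hne : qq ρ hQ m ≠ qq ρ hQ n := fun hc => hmn (qq_inj ρ hQ hc)
  rw [qq_form_inr ρ hQ m h2, qq_form_inr ρ hQ n h2']
  apply blDist_rr_same
  · intro hc
    apply hne
    rw [qq_form_inr ρ hQ m h2, qq_form_inr ρ hQ n h2', hc]
  · exact hpi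

lemma qdist_diff {m n : ℤ} (hpi : piZ ρ hQ m ≠ piZ ρ hQ n) :
    |(piZ ρ hQ m : ℝ) - (piZ ρ hQ n : ℝ)| ≤ blDist (bb ρ hQ) (qq ρ hQ m) (qq ρ hQ n) ∧
    blDist (bb ρ hQ) (qq ρ hQ m) (qq ρ hQ n) ≤ |(piZ ρ hQ m : ℝ) - (piZ ρ hQ n : ℝ)| + 2 := by
  by_cases h2m : 2 ≤ (fibF ρ hQ (piZ ρ hQ m)).card <;>
    by_cases h2n : 2 ≤ (fibF ρ hQ (piZ ρ hQ n)).card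
  · rw [qq_form_inr ρ hQ m h2m, qq_form_inr ρ hQ n h2n, blDist_rr_diff _ (by simpa using hpi)]
    simp only
    constructor <;> linarith [abs_nonneg ((piZ ρ hQ m : ℝ) - (piZ ρ hQ n : ℝ))]
  · rw [qq_form_inr ρ hQ m h2m, qq_form_inl ρ hQ n h2n, blDist_rl]
    simp only
    rw [abs_sub_comm]
    constructor <;> linarith
  · rw [qq_form_inl ρ hQ m h2m, qq_form_inr ρ hQ n h2n, blDist_lr]
    simp only
    constructor <;> linarith
  · rw [qq_form_inl ρ hQ m h2m, qq_form_inl ρ hQ n h2n, blDist_ll _ hpi]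
    constructor <;> linarith [abs_nonneg ((piZ ρ hQ m : ℝ) - (piZ ρ hQ n : ℝ))]

lemma piZ_ne_one_le {m n : ℤ} (hpi : piZ ρ hQ m ≠ piZ ρ hQ n) :
    (1:ℝ) ≤ |(piZ ρ hQ m : ℝ) - (piZ ρ hQ n : ℝ)| := by
  have h1 : (1:ℤ) ≤ |piZ ρ hQ m - piZ ρ hQ n| :=
    Int.one_le_abs (sub_ne_zero.mpr hpi)
  have h2 : ((|piZ ρ hQ m - piZ ρ hQ n| : ℤ) : ℝ) = |(piZ ρ hQ m : ℝ) - (piZ ρ hQ n : ℝ)| := by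
    rw [Int.cast_abs]; push_cast; ring_nf
  calc (1:ℝ) = ((1:ℤ):ℝ) := by norm_num
    _ ≤ ((|piZ ρ hQ m - piZ ρ hQ n| : ℤ) : ℝ) := by exact_mod_cast h1
    _ = _ := h2

lemma piZ_lower {m n : ℤ} (hpi : piZ ρ hQ m ≠ piZ ρ hQ n) :
    (|(m:ℝ) - n| - 4 * c2R L A) / ww L A - 1 ≤ |(piZ ρ hQ m : ℝ) - (piZ ρ hQ n : ℝ)| := by
  have hFne : Ff ρ hQ m ≠ Ff ρ hQ n := by
    intro hc
    apply hpi
    rw [piZ, piZ, hc]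
  rcases lt_or_gt_of_ne hFne with hlt | hgt
  · have haux := piZ_lower_aux ρ hQ (m := n) (n := m) hlt
    have hle : ((piZ ρ hQ n - piZ ρ hQ m : ℤ) : ℝ) ≤ |(piZ ρ hQ m : ℝ) - (piZ ρ hQ n : ℝ)| := by
      rw [abs_sub_comm]
      push_cast
      exact le_abs_self _
    rw [abs_sub_comm (n:ℝ) (m:ℝ)] at haux
    linarith
  · have haux := piZ_lower_aux ρ hQ (m := m) (n := n) hgt
    have hle : ((piZ ρ hQ m - piZ ρ hQ n : ℤ) : ℝ) ≤ |(piZ ρ hQ m : ℝ) - (piZ ρ hQ n : ℝ)| := by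
      push_cast
      exact le_abs_self _
    linarith

end Action

theorem stmt17aux :
    ∀ L A : ℝ, ∃ M : ℝ, 0 < M ∧
      ∀ (G : Type) [Group G] (ρ : G →* Equiv.Perm ℤ),
        (∀ g : G, IsQIZ L A (ρ g)) →
        ∃ (b : ℤ → ℕ) (σ : G →* Equiv.Perm (BL b)) (q : ℤ → BL b),
          (∀ (g : G) (x y : BL b), blDist b (σ g x) (σ g y) = blDist b x y) ∧
          (∀ n : ℤ, (b n : ℝ) + 2 ≤ M) ∧
          Set.BijOn q Set.univ {x : BL b | blTip b x} ∧
          (∀ (g : G) (n : ℤ), q (ρ g n) = σ g (q n)) ∧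
          (∀ m n : ℤ, M⁻¹ * |(m : ℝ) - n| ≤ blDist b (q m) (q n) ∧
            blDist b (q m) (q n) ≤ M * |(m : ℝ) - n|) := by
  intro L A
  refine ⟨9 * (c2R L A + 1)^2 + 1, by positivity, ?_⟩
  intro G _ ρ hQ
  have hc : (2:ℝ) ≤ c2R L A := c2R_ge ρ hQ
  have hMpos : (0:ℝ) < 9 * (c2R L A + 1)^2 + 1 := by positivity
  refine ⟨bb ρ hQ, shom ρ hQ, qq ρ hQ, ?_, ?_, ?_, ?_, ?_⟩
  · intro g x y
    exact sfun_isom ρ hQ g x y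
  · intro n
    have h1 : ((bb ρ hQ n : ℤ)) ≤ 8 * C2 L A + 1 := by
      have h0 := fibF_card_le ρ hQ n
      have hC := C2_ge ρ hQ
      rw [bb]
      split_ifs with h2
      · exact h0
      · omega
    have h2 : ((bb ρ hQ n : ℝ)) ≤ 8 * c2R L A + 1 := by
      have : ((bb ρ hQ n : ℤ) : ℝ) ≤ ((8 * C2 L A + 1 : ℤ) : ℝ) := by exact_mod_cast h1
      rw [c2R]
      push_cast at this ⊢
      linarith
    nlinarith [hc]
  · refine ⟨?_, ?_, ?_⟩
    · intro n _
      exact qq_tip ρ hQ n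
    · intro m _ n _ h
      exact qq_inj ρ hQ h
    · intro v hv
      obtain ⟨n, hn⟩ := tip_exists ρ hQ v hv
      exact ⟨n, Set.mem_univ n, hn⟩
  · intro g n
    exact (sfun_q ρ hQ g n).symm
  · intro m n
    by_cases hmn : m = n
    · subst hmn
      constructor <;> simp [blDist_self]
    · have hx1 : (1:ℝ) ≤ |(m:ℝ) - n| := by
        have h1 : (1:ℤ) ≤ |m - n| := Int.one_le_abs (sub_ne_zero.mpr hmn)
        have h2 : ((|m - n| : ℤ) : ℝ) = |(m:ℝ) - n| := by rw [Int.cast_abs]; push_cast; ring_nf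
        calc (1:ℝ) = ((1:ℤ):ℝ) := by norm_num
          _ ≤ ((|m - n| : ℤ):ℝ) := by exact_mod_cast h1
          _ = _ := h2
      by_cases hpi : piZ ρ hQ m = piZ ρ hQ n
      · rw [qdist_same ρ hQ hmn hpi]
        have hfd := piZ_fiber_dist ρ hQ hpi
        constructor
        · rw [inv_mul_eq_div, div_le_iff₀ hMpos]
          nlinarith [hc]
        · have hM2 : (2:ℝ) ≤ 9 * (c2R L A + 1)^2 + 1 := by nlinarith [hc]
          have e : (9 * (c2R L A + 1)^2 + 1) * 1 ≤ (9 * (c2R L A + 1)^2 + 1) * |(m:ℝ) - n| :=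
            mul_le_mul_of_nonneg_left hx1 (le_of_lt hMpos)
          linarith
      · obtain ⟨hlow, hup⟩ := qdist_diff ρ hQ hpi
        have h1pi := piZ_ne_one_le ρ hQ hpi
        have hplow := piZ_lower ρ hQ hpi
        have hpup := piZ_upper ρ hQ m n
        have hwpos := ww_pos ρ hQ
        constructor
        · by_cases hxM : |(m:ℝ) - n| ≤ 9 * (c2R L A + 1)^2 + 1
          · rw [inv_mul_eq_div, div_le_iff₀ hMpos]
            have e : 1 * (9 * (c2R L A + 1)^2 + 1)
                ≤ blDist (bb ρ hQ) (qq ρ hQ m) (qq ρ hQ n) * (9 * (c2R L A + 1)^2 + 1) :=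
              mul_le_mul_of_nonneg_right (le_trans h1pi hlow) (le_of_lt hMpos)
            linarith
          · push_neg at hxM
            rw [inv_mul_eq_div]
            have hMw : (0:ℝ) ≤ 9 * (c2R L A + 1)^2 + 1 - ww L A := by
              rw [ww]; nlinarith [hc]
            have e1 : (0:ℝ) ≤ (|(m:ℝ) - n| - (9 * (c2R L A + 1)^2 + 1))
                * (9 * (c2R L A + 1)^2 + 1 - ww L A) :=
              mul_nonneg (by linarith) hMw
            have e2 : (0:ℝ) ≤ (9 * (c2R L A + 1)^2 + 1)
                * (9 * (c2R L A + 1)^2 + 1 - ww L A - 4 * c2R L A - ww L A) := by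
              apply mul_nonneg (le_of_lt hMpos)
              rw [ww]
              nlinarith [hc]
            have hkey : (|(m:ℝ) - n| + (9 * (c2R L A + 1)^2 + 1)) * ww L A
                ≤ (|(m:ℝ) - n| - 4 * c2R L A) * (9 * (c2R L A + 1)^2 + 1) := by
              nlinarith [e1, e2]
            have h4 : |(m:ℝ) - n| / (9 * (c2R L A + 1)^2 + 1)
                ≤ (|(m:ℝ) - n| - 4 * c2R L A) / ww L A - 1 := by
              rw [div_le_iff₀ hMpos, sub_mul, one_mul, div_mul_eq_mul_div,
                le_sub_iff_add_le, le_div_iff₀ hwpos]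
              linarith
            linarith
        · have e3 : (0:ℝ) ≤ (9 * (c2R L A + 1)^2 + 1 - 1) * (|(m:ℝ) - n| - 1) :=
            mul_nonneg (by nlinarith [hc]) (by linarith)
          nlinarith [e3, hc]

end S17

end

/-- If a group `G` acts on `ℤ` by bijections which are
`(L,A)`-quasi-isometries, then there are a branched line `β = BL b`, an isometric
(automatically simplicial) action of `G` on `β`, and a `G`-equivariant bijection
`q : ℤ → t(β)` onto the set of tips of `β`, such that `q` is `M`-bi-Lipschitz and
every vertex of `β` has valence at most `M`, where `M` depends only on `L,A`. -/
theorem stmt17 :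
    ∀ L A : ℝ, ∃ M : ℝ, 0 < M ∧
      ∀ (G : Type) [Group G] (ρ : G →* Equiv.Perm ℤ),
        (∀ g : G, IsQIZ L A (ρ g)) →
        ∃ (b : ℤ → ℕ) (σ : G →* Equiv.Perm (BL b)) (q : ℤ → BL b),
          -- the action of `G` on the branched line is by isometries
          (∀ (g : G) (x y : BL b), blDist b (σ g x) (σ g y) = blDist b x y) ∧
          -- every vertex of `β` has valence at most `M`
          (∀ n : ℤ, (b n : ℝ) + 2 ≤ M) ∧
          -- `q` is a bijection of `ℤ` onto the set of tips of `β`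
          Set.BijOn q Set.univ {x : BL b | blTip b x} ∧
          -- `q` is `G`-equivariant
          (∀ (g : G) (n : ℤ), q (ρ g n) = σ g (q n)) ∧
          -- `q` is `M`-bi-Lipschitz
          (∀ m n : ℤ, M⁻¹ * |(m : ℝ) - n| ≤ blDist b (q m) (q n) ∧
            blDist b (q m) (q n) ≤ M * |(m : ℝ) - n|) := by
  exact S17.stmt17aux
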